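/- arXiv:2207.14372 — 8 statements merged into one kernel-verified Lean document; each statement's English description precedes it below -/
import Mathlib

section
/- If μ̂(X) is auto-calibrated for Y, then for every convex function ψ: ℝ → ℝ such that the relevant expectations exist, E[ψ(μ̂(X))] ≤ E[ψ(μ†(X))], where μ†(X) = E[Y | X]. That is, the true regression function dominates any auto-calibrated regression function in convex order. -/
open MeasureTheory ProbabilityTheory

/-- If `μ̂(X)` is auto-calibrated for `Y`, then for every convex `ψ : ℝ → ℝ` for which the
relevant expectations exist, `E[ψ(μ̂(X))] ≤ E[ψ(μ†(X))]` where `μ†(X) = E[Y | X]`: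
the true regression function dominates any auto-calibrated one in convex order. -/
theorem true_regression_dominates_convex_order
    {Ω E : Type*} [MeasurableSpace Ω] [MeasurableSpace E]
    (P : Measure Ω) [IsProbabilityMeasure P]
    (X : Ω → E) (Y : Ω → ℝ) (μhat : E → ℝ)
    (hX : Measurable X) (hμhat : Measurable μhat) (hY : Integrable Y P)
    (μdag : Ω → ℝ)
    (hμdag : μdag = P[Y | MeasurableSpace.comap X inferInstance])
    (hauto : P[Y | MeasurableSpace.comap (fun ω => μhat (X ω)) Real.measurableSpace]
      =ᵐ[P] fun ω => μhat (X ω))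
    (ψ : ℝ → ℝ) (hψ : ConvexOn ℝ Set.univ ψ)
    (hint1 : Integrable (fun ω => ψ (μhat (X ω))) P)
    (hint2 : Integrable (fun ω => ψ (μdag ω)) P) :
    (∫ ω, ψ (μhat (X ω)) ∂P) ≤ ∫ ω, ψ (μdag ω) ∂P := by
  set W : Ω → ℝ := fun ω => μhat (X ω) with hWdef
  have hW : Measurable W := hμhat.comp hX
  have hμdag_int : Integrable μdag P := hμdag ▸ integrable_condExp
  have hψcont : Continuous ψ := by
    rw [← continuousOn_univ]
    exact hψ.continuousOn isOpen_univ
  -- the regular conditional distribution of μdag given W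
  set κ := condDistrib μdag W P with hκdef
  -- σ-algebra comparisons
  have hle : MeasurableSpace.comap W Real.measurableSpace
      ≤ MeasurableSpace.comap X inferInstance := by
    rintro s ⟨t, ht, rfl⟩
    exact ⟨μhat ⁻¹' t, hμhat ht, rfl⟩
  have hXle : MeasurableSpace.comap X inferInstance ≤ ‹MeasurableSpace Ω› := hX.comap_le
  -- tower property: P[μdag | σ(W)] = P[Y | σ(W)] = W a.e.
  have htower : P[μdag | MeasurableSpace.comap W Real.measurableSpace]
      =ᵐ[P] W := by
    have := condExp_condExp_of_le (μ := P) (f := Y) hle hXle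
    exact (hμdag ▸ this).trans hauto
  -- conditional expectations via condDistrib
  have h1 : P[μdag | MeasurableSpace.comap W Real.measurableSpace]
      =ᵐ[P] fun ω => ∫ y, y ∂ κ (W ω) :=
    condExp_ae_eq_integral_condDistrib' hW hμdag_int
  have h2 : P[(fun ω => ψ (μdag ω)) | MeasurableSpace.comap W Real.measurableSpace]
      =ᵐ[P] fun ω => ∫ y, ψ y ∂ κ (W ω) :=
    condExp_ae_eq_integral_condDistrib hW hμdag_int.1.aemeasurable
      hψcont.stronglyMeasurable hint2
  have hZ : (fun ω => ∫ y, y ∂ κ (W ω)) =ᵐ[P] W := h1.symm.trans htower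
  -- a.e. integrability under the conditional distributions
  have hmap_int : Integrable (fun p : ℝ × ℝ => p.2) (P.map fun ω => (W ω, μdag ω)) := by
    rw [integrable_map_measure measurable_snd.aestronglyMeasurable
      (hW.aemeasurable.prodMk hμdag_int.1.aemeasurable)]
    exact hμdag_int
  have hmap_int2 : Integrable (fun p : ℝ × ℝ => ψ p.2) (P.map fun ω => (W ω, μdag ω)) := by
    have hm : AEStronglyMeasurable (fun p : ℝ × ℝ => ψ p.2)
        (P.map fun ω => (W ω, μdag ω)) :=
      (hψcont.comp continuous_snd).aestronglyMeasurable
    rw [integrable_map_measure hm (hW.aemeasurable.prodMk hμdag_int.1.aemeasurable)]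
    exact hint2
  have hi1 : ∀ᵐ ω ∂P, Integrable (fun y => y) (κ (W ω)) :=
    hmap_int.condDistrib_ae hW.aemeasurable hμdag_int.1.aemeasurable
  have hi2 : ∀ᵐ ω ∂P, Integrable (fun y => ψ y) (κ (W ω)) :=
    hmap_int2.condDistrib_ae hW.aemeasurable hμdag_int.1.aemeasurable
  -- pointwise (conditional) Jensen
  have hae : ∀ᵐ ω ∂P, ψ (W ω) ≤ ∫ y, ψ y ∂ κ (W ω) := by
    filter_upwards [hZ, hi1, hi2] with ω hω h1ω h2ω
    calc ψ (W ω) = ψ (∫ y, y ∂ κ (W ω)) := by rw [hω]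
      _ ≤ ∫ y, ψ y ∂ κ (W ω) :=
        hψ.map_integral_le hψcont.continuousOn isClosed_univ
          (Filter.Eventually.of_forall fun _ => Set.mem_univ _) h1ω h2ω
  -- integrate
  have hRHSint : Integrable (fun ω => ∫ y, ψ y ∂ κ (W ω)) P :=
    hmap_int2.integral_condDistrib hW.aemeasurable hμdag_int.1.aemeasurable
  calc (∫ ω, ψ (μhat (X ω)) ∂P) ≤ ∫ ω, ∫ y, ψ y ∂ κ (W ω) ∂P :=
        integral_mono_ae hint1 hRHSint hae
    _ = ∫ ω, (P[(fun ω => ψ (μdag ω)) | MeasurableSpace.comap W Real.measurableSpace]) ω ∂P :=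
        integral_congr_ae h2.symm
    _ = ∫ ω, ψ (μdag ω) ∂P := integral_condExp (hle.trans hXle)
end

section
/- If μ̂(X) is auto-calibrated for Y and E[ψ(μ̂(X))] = E[ψ(μ†(X))] for all convex functions ψ (whenever the expectations exist), then μ̂(X) = μ†(X) almost surely, where μ†(X) = E[Y | X]. -/
open MeasureTheory ProbabilityTheory

/-- The σ-algebra generated by `μhat ∘ X`. -/
def calibSigma {Ω E : Type*} (μhat : E → ℝ) (X : Ω → E) : MeasurableSpace Ω :=
  MeasurableSpace.comap (fun ω => μhat (X ω)) Real.measurableSpace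

/-- If `μ̂(X)` is auto-calibrated for `Y` and `E[ψ(μ̂(X))] = E[ψ(μ†(X))]` for all convex `ψ`
(whenever the expectations exist), then `μ̂(X) = μ†(X)` almost surely. -/
theorem convex_order_equality_implies_ae_eq
    {Ω E : Type*} [MeasurableSpace Ω] [MeasurableSpace E]
    (P : Measure Ω) [IsProbabilityMeasure P]
    (X : Ω → E) (Y : Ω → ℝ) (μhat : E → ℝ)
    (hX : Measurable X) (hμhat : Measurable μhat) (hY : Integrable Y P)
    (μdag : Ω → ℝ)
    (hμdag : μdag = P[Y | MeasurableSpace.comap X inferInstance])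
    (hauto : P[Y | MeasurableSpace.comap (fun ω => μhat (X ω)) Real.measurableSpace]
      =ᵐ[P] fun ω => μhat (X ω))
    (heq : ∀ ψ : ℝ → ℝ, ConvexOn ℝ Set.univ ψ →
      Integrable (fun ω => ψ (μhat (X ω))) P → Integrable (fun ω => ψ (μdag ω)) P →
      (∫ ω, ψ (μhat (X ω)) ∂P) = ∫ ω, ψ (μdag ω) ∂P) :
    (fun ω => μhat (X ω)) =ᵐ[P] μdag := by
  have hauto' : P[Y | calibSigma μhat X] =ᵐ[P] fun ω => μhat (X ω) := hauto
  have hle : calibSigma μhat X ≤ MeasurableSpace.comap X inferInstance := by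
    rw [calibSigma, show (fun ω => μhat (X ω)) = μhat ∘ X from rfl,
      ← MeasurableSpace.comap_comp]
    exact MeasurableSpace.comap_mono hμhat.comap_le
  have hXle : MeasurableSpace.comap X inferInstance ≤ (inferInstance : MeasurableSpace Ω) :=
    hX.comap_le
  have hm : calibSigma μhat X ≤ (inferInstance : MeasurableSpace Ω) := hle.trans hXle
  have hμdag_int : Integrable μdag P := by rw [hμdag]; exact integrable_condExp
  have hhat_meas : Measurable[calibSigma μhat X] (fun ω => μhat (X ω)) :=
    fun s hs => ⟨s, hs, rfl⟩
  have hkey : P[μdag | calibSigma μhat X] =ᵐ[P] fun ω => μhat (X ω) := by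
    rw [hμdag]
    exact (condExp_condExp_of_le hle hXle).trans hauto'
  have hhat_int : Integrable (fun ω => μhat (X ω)) P := integrable_condExp.congr hauto'
  -- For each `c`, a.e. on `{μhat (X ω) ≤ c}` we have `μdag ≤ c`.
  have hstep : ∀ c : ℝ, ∀ᵐ ω ∂P, μhat (X ω) ≤ c → μdag ω ≤ c := by
    intro c
    have hconv : ConvexOn ℝ Set.univ (fun x : ℝ => max (x - c) 0) := by
      have h1 : ConvexOn ℝ Set.univ (fun x : ℝ => x - c) :=
        (convexOn_id convex_univ).sub (concaveOn_const c convex_univ)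
      exact h1.sup (convexOn_const 0 convex_univ)
    have int1 : Integrable (fun ω => max (μhat (X ω) - c) 0) P :=
      (hhat_int.sub (integrable_const c)).pos_part
    have int2 : Integrable (fun ω => max (μdag ω - c) 0) P :=
      (hμdag_int.sub (integrable_const c)).pos_part
    have hiq : (∫ ω, max (μhat (X ω) - c) 0 ∂P) = ∫ ω, max (μdag ω - c) 0 ∂P :=
      heq (fun x => max (x - c) 0) hconv int1 int2
    -- Jensen-lite: `max (μhat (X ω) - c) 0 ≤ E[max (μdag - c) 0 | m]` a.e.
    have hge : (fun ω => max (μhat (X ω) - c) 0)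
        ≤ᵐ[P] P[fun ω => max (μdag ω - c) 0 | calibSigma μhat X] := by
      have h0 : (0 : Ω → ℝ) ≤ᵐ[P] P[fun ω => max (μdag ω - c) 0 | calibSigma μhat X] :=
        condExp_nonneg (ae_of_all _ fun ω => le_max_right _ _)
      have hmono : P[fun ω => μdag ω - c | calibSigma μhat X]
          ≤ᵐ[P] P[fun ω => max (μdag ω - c) 0 | calibSigma μhat X] :=
        condExp_mono (hμdag_int.sub (integrable_const c)) int2
          (ae_of_all _ fun ω => le_max_left _ _)
      have hsub : P[fun ω => μdag ω - c | calibSigma μhat X]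
          =ᵐ[P] fun ω => μhat (X ω) - c := by
        have h2 : P[fun ω => μdag ω - c | calibSigma μhat X]
            =ᵐ[P] P[μdag | calibSigma μhat X] - P[fun _ => c | calibSigma μhat X] :=
          condExp_sub hμdag_int (integrable_const c) _
        refine h2.trans ?_
        rw [condExp_const hm]
        filter_upwards [hkey] with ω hω
        simp only [Pi.sub_apply, hω]
      filter_upwards [h0, hmono, hsub] with ω h0ω hmω hsω
      have h1 : μhat (X ω) - c ≤ (P[fun ω => max (μdag ω - c) 0 | calibSigma μhat X]) ω := by
        rw [← hsω]; exact hmω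
      exact max_le h1 h0ω
    -- Equality of integrals forces a.e. equality of condexp and `max (μhat ∘ X - c) 0`.
    have hint_eq : ∫ ω, ((P[fun ω => max (μdag ω - c) 0 | calibSigma μhat X]) ω
        - max (μhat (X ω) - c) 0) ∂P = 0 := by
      rw [integral_sub integrable_condExp int1, integral_condExp hm, ← hiq, sub_self]
    have hdiff : (fun ω => (P[fun ω => max (μdag ω - c) 0 | calibSigma μhat X]) ω
        - max (μhat (X ω) - c) 0) =ᵐ[P] 0 :=
      (integral_eq_zero_iff_of_nonneg_ae
        (hge.mono fun ω h => by simpa [sub_nonneg] using h)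
        (integrable_condExp.sub int1)).mp hint_eq
    have hcond_eq : P[fun ω => max (μdag ω - c) 0 | calibSigma μhat X]
        =ᵐ[P] fun ω => max (μhat (X ω) - c) 0 := by
      filter_upwards [hdiff] with ω hω
      have h3 : (P[fun ω => max (μdag ω - c) 0 | calibSigma μhat X]) ω
          - max (μhat (X ω) - c) 0 = 0 := hω
      linarith
    -- Integrate over `A = {μhat (X ω) ≤ c}`.
    have hA : MeasurableSet[calibSigma μhat X] ((fun ω => μhat (X ω)) ⁻¹' Set.Iic c) :=
      hhat_meas measurableSet_Iic
    have hA' : MeasurableSet ((fun ω => μhat (X ω)) ⁻¹' Set.Iic c) := hm _ hA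
    have hset : ∫ ω in (fun ω => μhat (X ω)) ⁻¹' Set.Iic c, max (μdag ω - c) 0 ∂P = 0 := by
      rw [← setIntegral_condExp hm int2 hA,
        setIntegral_congr_ae hA' (hcond_eq.mono fun ω h _ => h),
        setIntegral_congr_ae (g := fun _ => (0 : ℝ)) hA'
          (ae_of_all _ fun ω hω => max_eq_right (by
            simpa [sub_nonpos] using (hω : μhat (X ω) ≤ c)))]
      simp
    have hzero : (fun ω => max (μdag ω - c) 0)
        =ᵐ[P.restrict ((fun ω => μhat (X ω)) ⁻¹' Set.Iic c)] 0 :=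
      (integral_eq_zero_iff_of_nonneg_ae (ae_of_all _ fun ω => le_max_right _ _)
        (int2.restrict)).mp hset
    have h4 := (ae_restrict_iff' hA').mp hzero
    filter_upwards [h4] with ω hω hc
    have h0 : max (μdag ω - c) 0 = 0 := hω hc
    have h5 : μdag ω - c ≤ 0 := by
      by_contra h6
      push_neg at h6
      rw [max_eq_left h6.le] at h0
      linarith
    linarith
  -- Combine over rationals: `μdag ≤ μhat ∘ X` a.e.
  have hrat : ∀ᵐ ω ∂P, ∀ q : ℚ, μhat (X ω) ≤ q → μdag ω ≤ q :=
    ae_all_iff.mpr fun q => hstep (q : ℝ)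
  have hle2 : ∀ᵐ ω ∂P, μdag ω ≤ μhat (X ω) := by
    filter_upwards [hrat] with ω hω
    by_contra h
    push_neg at h
    obtain ⟨q, hq1, hq2⟩ := exists_rat_btwn h
    exact absurd (hω q hq1.le) (not_le.mpr hq2)
  -- Equal expectations then force a.e. equality.
  have hint_eq : ∫ ω, (μhat (X ω) - μdag ω) ∂P = 0 := by
    rw [integral_sub hhat_int hμdag_int, integral_congr_ae hkey.symm, integral_condExp hm,
      sub_self]
  have hdiff : (fun ω => μhat (X ω) - μdag ω) =ᵐ[P] 0 :=
    (integral_eq_zero_iff_of_nonneg_ae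
      (hle2.mono fun ω h => by simpa [sub_nonneg] using h)
      (hhat_int.sub hμdag_int)).mp hint_eq
  filter_upwards [hdiff] with ω hω
  have : μhat (X ω) - μdag ω = 0 := hω
  linarith
end

section
/- For any convex differentiable function ψ and any regression function μ̂(X) auto-calibrated for Y, the true regression function μ†(X) = E[Y | X] forecast-dominates μ̂: E[−D_ψ(Y, μ†(X))] ≥ E[−D_ψ(Y, μ̂(X))], where D_ψ(y, m) = ψ(y) − ψ(m) − ψ'(m)(y − m) is the Bregman divergence. -/
open MeasureTheory ProbabilityTheory

/-- Subgradient inequality for a convex differentiable function. -/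
lemma bregman_pointwise_nonneg (ψ : ℝ → ℝ) (hψ : ConvexOn ℝ Set.univ ψ)
    (hdiff : Differentiable ℝ ψ) (a b : ℝ) :
    0 ≤ ψ a - ψ b - deriv ψ b * (a - b) := by
  rcases lt_trichotomy a b with h | h | h
  · have hs := hψ.slope_le_deriv (Set.mem_univ a) (Set.mem_univ b) h (hdiff b)
    rw [slope_def_field] at hs
    have hba : 0 < b - a := by linarith
    have := (div_le_iff₀ hba).mp hs
    nlinarith
  · subst h; simp
  · have hs := hψ.deriv_le_slope (Set.mem_univ b) (Set.mem_univ a) h (hdiff b)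
    rw [slope_def_field] at hs
    have hab : 0 < a - b := by linarith
    have := (le_div_iff₀ hab).mp hs
    nlinarith

/-- Core argument: for a sub-σ-algebra `m`, the conditional mean `μd = P[Y|m]`
forecast-dominates any `m`-measurable forecast `μh` w.r.t. a Bregman divergence. -/
lemma bregman_core {Ω : Type*} {m m0 : MeasurableSpace Ω}
    (hm : m ≤ m0) (P : @MeasureTheory.Measure Ω m0)
    [IsProbabilityMeasure P]
    (Y μd μh : Ω → ℝ) (hY : Integrable Y P)
    (hμd : μd = P[Y | m]) (hμh_sm : StronglyMeasurable[m] μh)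
    (ψ : ℝ → ℝ) (hψ : ConvexOn ℝ Set.univ ψ) (hdiff : Differentiable ℝ ψ)
    (D : ℝ → ℝ → ℝ) (hD : ∀ y m, D y m = ψ y - ψ m - deriv ψ m * (y - m))
    (hint1 : Integrable (fun ω => D (Y ω) (μd ω)) P)
    (hint2 : Integrable (fun ω => D (Y ω) (μh ω)) P) :
    0 ≤ ∫ ω, (D (Y ω) (μh ω) - D (Y ω) (μd ω)) ∂P := by
  classical
  have hμd_sm : StronglyMeasurable[m] μd := by rw [hμd]; exact stronglyMeasurable_condExp
  have hμd_int : Integrable μd P := by rw [hμd]; exact integrable_condExp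
  set B : Ω → ℝ := fun ω => deriv ψ (μd ω) - deriv ψ (μh ω) with hB_def
  set Z : Ω → ℝ := fun ω => Y ω - μd ω with hZ_def
  set g : Ω → ℝ := fun ω => D (μd ω) (μh ω) with hg_def
  set h : Ω → ℝ := fun ω => D (Y ω) (μh ω) - D (Y ω) (μd ω) with hh_def
  have hderiv_meas : Measurable (deriv ψ) := measurable_deriv ψ
  have hB_sm : StronglyMeasurable[m] B := by
    have h1 : Measurable[m] fun ω => deriv ψ (μd ω) :=
      hderiv_meas.comp hμd_sm.measurable
    have h2 : Measurable[m] fun ω => deriv ψ (μh ω) :=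
      hderiv_meas.comp hμh_sm.measurable
    exact (h1.sub h2).stronglyMeasurable
  have hZ_int : Integrable Z P := hY.sub hμd_int
  have hh_int : Integrable h P := hint2.sub hint1
  -- conditional expectation of Z is 0
  have hZc : P[Z | m] =ᵐ[P] 0 := by
    have h1 : P[Z | m] =ᵐ[P] P[Y | m] - P[μd | m] := condExp_sub hY hμd_int m
    have h2 : P[μd | m] =ᵐ[P] μd := by
      rw [hμd]; exact condExp_condExp_of_le le_rfl hm
    filter_upwards [h1, h2] with ω h1ω h2ω
    simp only [Pi.sub_apply, Pi.zero_apply] at *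
    rw [h1ω, h2ω, hμd]
    ring
  -- decomposition
  have hdecomp : ∀ ω, h ω = g ω + B ω * Z ω := by
    intro ω
    simp only [hh_def, hg_def, hB_def, hZ_def, hD]
    ring
  have hg0 : ∀ ω, 0 ≤ g ω := by
    intro ω
    show 0 ≤ D (μd ω) (μh ω)
    rw [hD]
    exact bregman_pointwise_nonneg ψ hψ hdiff _ _
  -- truncation sets
  set s : ℕ → Set Ω := fun n => {ω | |B ω| ≤ n} with hs_def
  have hs_meas_m : ∀ n, MeasurableSet[m] (s n) := by
    intro n
    have hR : MeasurableSet {x : ℝ | |x| ≤ (n : ℝ)} :=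
      measurableSet_le measurable_abs measurable_const
    exact hB_sm.measurable hR
  have hs_meas : ∀ n, MeasurableSet[m0] (s n) := fun n => hm _ (hs_meas_m n)
  have hs_mono : Monotone s := by
    intro i j hij ω hω
    simp only [hs_def, Set.mem_setOf_eq] at *
    refine le_trans hω ?_
    exact_mod_cast hij
  have hs_union : (⋃ n, s n) = Set.univ := by
    ext ω
    simp only [Set.mem_iUnion, Set.mem_univ, iff_true, hs_def, Set.mem_setOf_eq]
    obtain ⟨n, hn⟩ := exists_nat_ge |B ω|
    exact ⟨n, hn⟩
  -- for each n, ∫_{s n} h ≥ 0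
  have hmain : ∀ n : ℕ, 0 ≤ ∫ ω in s n, h ω ∂P := by
    intro n
    set fB : Ω → ℝ := (s n).indicator B with hfB_def
    have hfB_sm : StronglyMeasurable[m] fB := hB_sm.indicator (hs_meas_m n)
    have hfB_bdd : ∀ ω, ‖fB ω‖ ≤ n := by
      intro ω
      rw [hfB_def]
      by_cases hω : ω ∈ s n
      · rw [Set.indicator_of_mem hω]; exact hω
      · rw [Set.indicator_of_notMem hω]; simp
    have hfBZ_int : Integrable (fun ω => fB ω * Z ω) P :=
      hZ_int.bdd_mul ((hfB_sm.mono hm).aestronglyMeasurable) (Filter.Eventually.of_forall hfB_bdd)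
    -- ∫ fB * Z = 0
    have hzero : ∫ ω, fB ω * Z ω ∂P = 0 := by
      have hpull : P[fun ω => fB ω * Z ω | m] =ᵐ[P] fB * P[Z | m] :=
        condExp_mul_of_stronglyMeasurable_left hfB_sm hfBZ_int hZ_int
      have hzero' : P[fun ω => fB ω * Z ω | m] =ᵐ[P] 0 := by
        filter_upwards [hpull, hZc] with ω h1 h2
        simp only [Pi.mul_apply, Pi.zero_apply] at *
        rw [h1, h2, mul_zero]
      calc ∫ ω, fB ω * Z ω ∂P = ∫ ω, (P[fun ω => fB ω * Z ω | m]) ω ∂P :=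
            (integral_condExp hm).symm
        _ = ∫ ω, (0 : ℝ) ∂P := integral_congr_ae hzero'
        _ = 0 := integral_zero _ _
    -- fB * Z = indicator of B * Z on s n
    have hind : (fun ω => fB ω * Z ω) = (s n).indicator (fun ω => B ω * Z ω) := by
      funext ω
      by_cases hω : ω ∈ s n
      · simp [hfB_def, Set.indicator_of_mem hω]
      · simp [hfB_def, Set.indicator_of_notMem hω]
    have hBZ_intOn : IntegrableOn (fun ω => B ω * Z ω) (s n) P :=
      (integrable_indicator_iff (hs_meas n)).mp (hind ▸ hfBZ_int)
    have hsetBZ : ∫ ω in s n, B ω * Z ω ∂P = 0 := by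
      rw [← integral_indicator (hs_meas n), ← hind, hzero]
    have hg_intOn : IntegrableOn g (s n) P := by
      have hgeq : g = fun ω => h ω - B ω * Z ω := by
        funext ω; rw [hdecomp ω]; ring
      rw [hgeq]
      exact (hh_int.integrableOn).sub hBZ_intOn
    have hseth : ∫ ω in s n, h ω ∂P = ∫ ω in s n, g ω ∂P + ∫ ω in s n, B ω * Z ω ∂P := by
      rw [← integral_add hg_intOn hBZ_intOn]
      exact setIntegral_congr_fun (hs_meas n) (fun ω _ => hdecomp ω)
    rw [hseth, hsetBZ, add_zero]
    exact setIntegral_nonneg (hs_meas n) (fun ω _ => hg0 ω)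
  -- pass to the limit
  have hlim : Filter.Tendsto (fun n => ∫ ω in s n, h ω ∂P) Filter.atTop
      (nhds (∫ ω in ⋃ n, s n, h ω ∂P)) :=
    tendsto_setIntegral_of_monotone hs_meas hs_mono
      (hs_union ▸ hh_int.integrableOn)
  have huniv : (∫ ω in ⋃ n, s n, h ω ∂P) = ∫ ω, h ω ∂P := by
    rw [hs_union, setIntegral_univ]
  rw [← huniv]
  exact ge_of_tendsto' hlim hmain

/-- For convex differentiable `ψ` and auto-calibrated `μ̂(X)`, the true regression function
`μ†(X) = E[Y | X]` forecast-dominates `μ̂`: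
`E[−D_ψ(Y, μ†(X))] ≥ E[−D_ψ(Y, μ̂(X))]`, with Bregman divergence
`D_ψ(y, m) = ψ(y) − ψ(m) − ψ'(m)(y − m)`. -/
theorem bregman_forecast_dominance
    {Ω E : Type*} [MeasurableSpace Ω] [MeasurableSpace E]
    (P : Measure Ω) [IsProbabilityMeasure P]
    (X : Ω → E) (Y : Ω → ℝ) (μhat : E → ℝ)
    (hX : Measurable X) (hμhat : Measurable μhat) (hY : Integrable Y P)
    (μdag : Ω → ℝ)
    (hμdag : μdag = P[Y | MeasurableSpace.comap X inferInstance])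
    (hauto : P[Y | MeasurableSpace.comap (fun ω => μhat (X ω)) Real.measurableSpace]
      =ᵐ[P] fun ω => μhat (X ω))
    (ψ : ℝ → ℝ) (hψ : ConvexOn ℝ Set.univ ψ) (hdiff : Differentiable ℝ ψ)
    (D : ℝ → ℝ → ℝ) (hD : ∀ y m, D y m = ψ y - ψ m - deriv ψ m * (y - m))
    (hint1 : Integrable (fun ω => D (Y ω) (μdag ω)) P)
    (hint2 : Integrable (fun ω => D (Y ω) (μhat (X ω))) P) :
    (∫ ω, -D (Y ω) (μdag ω) ∂P) ≥ ∫ ω, -D (Y ω) (μhat (X ω)) ∂P := by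
  have hm : MeasurableSpace.comap X inferInstance ≤ ‹MeasurableSpace Ω› :=
    hX.comap_le
  have hμh_sm : StronglyMeasurable[MeasurableSpace.comap X inferInstance]
      (fun ω => μhat (X ω)) :=
    (hμhat.comp (comap_measurable X)).stronglyMeasurable
  have key := bregman_core hm P Y μdag (fun ω => μhat (X ω)) hY hμdag hμh_sm
    ψ hψ hdiff D hD hint1 hint2
  have hsplit : ∫ ω, (D (Y ω) (μhat (X ω)) - D (Y ω) (μdag ω)) ∂P =
      (∫ ω, D (Y ω) (μhat (X ω)) ∂P) - ∫ ω, D (Y ω) (μdag ω) ∂P :=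
    integral_sub hint2 hint1
  rw [hsplit] at key
  rw [integral_neg, integral_neg]
  linarith
end

section
/- Suppose μ̂(X) has continuous distribution F_{μ̂(X)} and Y ≥ 0 is integrable with E[Y] > 0. Then the integral of the cumulative accuracy profile satisfies ∫₀¹ CAP_{Y,μ̂(X)}(α) dα = E[Y · F_{μ̂(X)}(μ̂(X))] / E[Y], where CAP_{Y,μ̂(X)}(α) = E[Y · 1{μ̂(X) > F⁻¹_{μ̂(X)}(1−α)}] / E[Y]. -/
open MeasureTheory ProbabilityTheory Filter Set
open scoped ENNReal

/-- If `μ̂(X)` has continuous distribution function `F` and `Y ≥ 0` is integrable with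
`E[Y] > 0`, then `∫₀¹ CAP_{Y,μ̂(X)}(α) dα = E[Y · F(μ̂(X))]/E[Y]`, where
`CAP(α) = E[Y · 1{μ̂(X) > F⁻¹(1−α)}]/E[Y]`. -/
theorem integral_CAP_eq
    {Ω : Type*} [MeasurableSpace Ω] (P : Measure Ω) [IsProbabilityMeasure P]
    (M Y : Ω → ℝ) (hM : Measurable M) (hY : Integrable Y P)
    (hYpos : ∀ ω, 0 ≤ Y ω) (hEY : 0 < ∫ ω, Y ω ∂P)
    (F : ℝ → ℝ) (hF : ∀ t, F t = (P {ω | M ω ≤ t}).toReal) (hcont : Continuous F)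
    (Finv : ℝ → ℝ) (hFinv : ∀ α, Finv α = sInf {t : ℝ | α ≤ F t})
    (CAP : ℝ → ℝ)
    (hCAP : ∀ α, CAP α =
      (∫ ω, Y ω * (if Finv (1 - α) < M ω then (1 : ℝ) else 0) ∂P) / ∫ ω, Y ω ∂P) :
    (∫ α in Set.Ioo (0 : ℝ) 1, CAP α) =
      (∫ ω, Y ω * F (M ω) ∂P) / ∫ ω, Y ω ∂P := by
  -- basic facts about F
  have hFmono : Monotone F := by
    intro s t hst
    rw [hF s, hF t]
    exact ENNReal.toReal_mono (measure_ne_top _ _)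
      (measure_mono fun ω (hω : M ω ≤ s) => hω.trans hst)
  have hF0 : ∀ t, 0 ≤ F t := fun t => by rw [hF t]; positivity
  have hF1 : ∀ t, F t ≤ 1 := by
    intro t
    rw [hF t]
    exact ENNReal.toReal_le_of_le_ofReal one_pos.le (by simpa using prob_le_one)
  -- the set {t | β ≤ F t} is nonempty for β < 1
  have hne : ∀ β : ℝ, β < 1 → {t : ℝ | β ≤ F t}.Nonempty := by
    intro β hβ
    have hmono : Monotone fun n : ℕ => {ω | M ω ≤ (n : ℝ)} := by
      intro a b hab ω (hω : M ω ≤ (a : ℝ))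
      exact hω.trans (by exact_mod_cast hab)
    have hU : (⋃ n : ℕ, {ω | M ω ≤ (n : ℝ)}) = Set.univ := by
      ext ω; simp only [Set.mem_iUnion, Set.mem_univ, iff_true, Set.mem_setOf_eq]
      exact exists_nat_ge (M ω)
    have ht : Tendsto (fun n : ℕ => P {ω | M ω ≤ (n : ℝ)}) atTop (nhds 1) := by
      have := tendsto_measure_iUnion_atTop (μ := P) hmono
      rwa [hU, measure_univ] at this
    have ht2 : Tendsto (fun n : ℕ => F (n : ℝ)) atTop (nhds 1) := by
      have := (ENNReal.tendsto_toReal (by norm_num : (1 : ℝ≥0∞) ≠ ⊤)).comp ht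
      simpa [Function.comp_def, hF] using this
    obtain ⟨n, hn⟩ := (ht2.eventually_const_lt hβ).exists
    exact ⟨(n : ℝ), hn.le⟩
  -- the set is bounded below for β > 0
  have hbdd : ∀ β : ℝ, 0 < β → BddBelow {t : ℝ | β ≤ F t} := by
    intro β hβ
    have hanti : Antitone fun n : ℕ => {ω | M ω ≤ -(n : ℝ)} := by
      intro a b hab ω (hω : M ω ≤ -(b : ℝ))
      exact hω.trans (by exact_mod_cast neg_le_neg (Nat.cast_le.2 hab))
    have hI : (⋂ n : ℕ, {ω | M ω ≤ -(n : ℝ)}) = ∅ := by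
      ext ω; simp only [Set.mem_iInter, Set.mem_empty_iff_false, iff_false, Set.mem_setOf_eq,
        not_forall, not_le]
      obtain ⟨n, hn⟩ := exists_nat_gt (-M ω)
      exact ⟨n, by linarith⟩
    have ht : Tendsto (fun n : ℕ => P {ω | M ω ≤ -(n : ℝ)}) atTop (nhds 0) := by
      have hms : ∀ n : ℕ, NullMeasurableSet {ω | M ω ≤ -(n : ℝ)} P := fun n =>
        (show MeasurableSet {ω | M ω ≤ -(n : ℝ)} from hM measurableSet_Iic).nullMeasurableSet
      have := tendsto_measure_iInter_atTop (μ := P) (s := fun n : ℕ => {ω | M ω ≤ -(n : ℝ)})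
        hms hanti ⟨0, measure_ne_top _ _⟩
      rwa [hI, measure_empty] at this
    have ht2 : Tendsto (fun n : ℕ => F (-(n : ℝ))) atTop (nhds 0) := by
      have := (ENNReal.tendsto_toReal (by norm_num : (0 : ℝ≥0∞) ≠ ⊤)).comp ht
      simpa [Function.comp_def, hF] using this
    obtain ⟨n, hn⟩ := (ht2.eventually_lt_const hβ).exists
    refine ⟨-(n : ℝ), fun t ht => ?_⟩
    by_contra h
    push_neg at h
    exact absurd (ht.trans (hFmono h.le)) (not_le.2 hn)
  -- key equivalences
  have h1 : ∀ β m : ℝ, 0 < β → β < 1 → Finv β < m → β ≤ F m := by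
    intro β m hβ0 hβ1 h
    rw [hFinv] at h
    obtain ⟨t, (ht : β ≤ F t), htm⟩ := (csInf_lt_iff (hbdd β hβ0) (hne β hβ1)).1 h
    exact ht.trans (hFmono htm.le)
  have h2 : ∀ β m : ℝ, 0 < β → β < F m → Finv β < m := by
    intro β m hβ0 h
    have hev : ∀ᶠ t in nhdsWithin m (Set.Iio m), β < F t :=
      nhdsWithin_le_nhds ((hcont.tendsto m).eventually_const_lt h)
    obtain ⟨t, ht, htm⟩ := (hev.and self_mem_nhdsWithin).exists
    calc Finv β ≤ t := by rw [hFinv]; exact csInf_le (hbdd β hβ0) ht.le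
    _ < m := htm
  -- setup product measure
  set μ : Measure ℝ := volume.restrict (Set.Ioo (0 : ℝ) 1) with hμ
  have : IsFiniteMeasure μ := ⟨by simp [hμ]⟩
  set f : ℝ × Ω → ℝ := fun p => Y p.2 * (if Finv (1 - p.1) < M p.2 then (1 : ℝ) else 0) with hf_def
  set g : ℝ × Ω → ℝ := fun p => Y p.2 * (if 1 - p.1 < F (M p.2) then (1 : ℝ) else 0) with hg_def
  -- g is measurable-ish and integrable
  have hFM : Measurable fun ω => F (M ω) := hcont.measurable.comp hM
  have hgm : AEStronglyMeasurable g (μ.prod P) := by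
    apply AEStronglyMeasurable.mul
    · exact hY.aestronglyMeasurable.comp_snd
    · refine (Measurable.aestronglyMeasurable ?_)
      have hset : MeasurableSet {p : ℝ × Ω | 1 - p.1 < F (M p.2)} := by
        exact measurableSet_lt (measurable_const.sub measurable_fst) (hFM.comp measurable_snd)
      exact Measurable.ite hset measurable_const measurable_const
  have hYsnd : Integrable (fun p : ℝ × Ω => Y p.2) (μ.prod P) := by
    have := Integrable.mul_prod (f := fun _ : ℝ => (1 : ℝ)) (g := Y)
      (integrable_const 1) hY (μ := μ) (ν := P)
    simpa using this
  have hgi : Integrable g (μ.prod P) := by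
    refine Integrable.mono' hYsnd hgm ?_
    refine Filter.Eventually.of_forall fun p => ?_
    rw [hg_def]
    simp only
    rw [Real.norm_eq_abs, abs_mul]
    have : |if 1 - p.1 < F (M p.2) then (1:ℝ) else 0| ≤ 1 := by split <;> simp
    calc |Y p.2| * |if 1 - p.1 < F (M p.2) then (1:ℝ) else 0| ≤ |Y p.2| * 1 :=
      mul_le_mul_of_nonneg_left this (abs_nonneg _)
    _ = Y p.2 := by rw [mul_one, abs_of_nonneg (hYpos _)]
  -- f = g a.e. on the product
  have hN : (μ.prod P) {p : ℝ × Ω | 1 - p.1 = F (M p.2)} = 0 := by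
    have hNm : MeasurableSet {p : ℝ × Ω | 1 - p.1 = F (M p.2)} :=
      measurableSet_eq_fun (measurable_const.sub measurable_fst) (hFM.comp measurable_snd)
    have hswap : μ.prod P = Measure.map Prod.swap (P.prod μ) := (Measure.prod_swap).symm
    rw [hswap, Measure.map_apply measurable_swap hNm]
    have : Prod.swap ⁻¹' {p : ℝ × Ω | 1 - p.1 = F (M p.2)}
        = {q : Ω × ℝ | 1 - q.2 = F (M q.1)} := rfl
    rw [this]
    have hmeas2 : MeasurableSet {q : Ω × ℝ | 1 - q.2 = F (M q.1)} := by
      exact measurableSet_eq_fun (f := fun q : Ω × ℝ => 1 - q.2)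
        (g := fun q : Ω × ℝ => F (M q.1))
        (measurable_const.sub measurable_snd) (hFM.comp measurable_fst)
    rw [Measure.measure_prod_null hmeas2]
    refine Filter.Eventually.of_forall fun ω => ?_
    show μ (Prod.mk ω ⁻¹' {q : Ω × ℝ | 1 - q.2 = F (M q.1)}) = 0
    have : (Prod.mk ω ⁻¹' {q : Ω × ℝ | 1 - q.2 = F (M q.1)}) = {1 - F (M ω)} := by
      ext α; simp [eq_comm, sub_eq_iff_eq_add]; constructor <;> intro h <;> linarith
    rw [this]
    exact le_antisymm ((Measure.restrict_le_self _).trans_eq (Real.volume_singleton)) zero_le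
  have hfg : f =ᵐ[μ.prod P] g := by
    have hmem : ∀ᵐ p ∂(μ.prod P), p.1 ∈ Set.Ioo (0 : ℝ) 1 := by
      have : (μ.prod P) {p : ℝ × Ω | p.1 ∉ Set.Ioo (0:ℝ) 1} = 0 := by
        have : {p : ℝ × Ω | p.1 ∉ Set.Ioo (0:ℝ) 1} = (Set.Ioo (0:ℝ) 1)ᶜ ×ˢ Set.univ := by
          ext p; simp
        rw [this, Measure.prod_prod]
        simp [hμ, Measure.restrict_apply (measurableSet_Ioo.compl)]
      exact (ae_iff).2 (by simpa using this)
    have hneq : ∀ᵐ p ∂(μ.prod P), ¬(1 - p.1 = F (M p.2)) := (ae_iff).2 (by simpa using hN)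
    filter_upwards [hmem, hneq] with p hp hne'
    rw [hf_def, hg_def]
    simp only
    congr 1
    have hβ0 : 0 < 1 - p.1 := by linarith [hp.2]
    have hβ1 : 1 - p.1 < 1 := by linarith [hp.1]
    by_cases h : Finv (1 - p.1) < M p.2
    · rw [if_pos h, if_pos (lt_of_le_of_ne (h1 _ _ hβ0 hβ1 h) hne')]
    · rw [if_neg h, if_neg]
      intro hc
      exact h (h2 _ _ hβ0 hc)
  have hfi : Integrable f (μ.prod P) := hgi.congr hfg.symm
  -- main computation
  have key : (∫ α in Set.Ioo (0:ℝ) 1, ∫ ω, Y ω * (if Finv (1 - α) < M ω then (1:ℝ) else 0) ∂P)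
      = ∫ ω, Y ω * F (M ω) ∂P := by
    have e1 : (∫ α in Set.Ioo (0:ℝ) 1, ∫ ω, Y ω * (if Finv (1 - α) < M ω then (1:ℝ) else 0) ∂P)
        = ∫ p, f p ∂(μ.prod P) := (integral_prod f hfi).symm
    have e2 : ∫ p, f p ∂(μ.prod P) = ∫ p, g p ∂(μ.prod P) := integral_congr_ae hfg
    have e3 : ∫ p, g p ∂(μ.prod P) = ∫ ω, (∫ α in Set.Ioo (0:ℝ) 1,
        Y ω * (if 1 - α < F (M ω) then (1:ℝ) else 0)) ∂P := integral_prod_symm g hgi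
    rw [e1, e2, e3]
    refine integral_congr_ae (Filter.Eventually.of_forall fun ω => ?_)
    -- inner integral computation
    have hc0 : 0 ≤ F (M ω) := hF0 _
    have hc1 : F (M ω) ≤ 1 := hF1 _
    have hind : ∀ α : ℝ, (if 1 - α < F (M ω) then (1:ℝ) else 0)
        = Set.indicator (Set.Ioi (1 - F (M ω))) (fun _ => (1:ℝ)) α := by
      intro α
      rw [Set.indicator_apply]
      simp only [Set.mem_Ioi]
      congr 1
      simp only [eq_iff_iff]
      constructor <;> intro h <;> linarith
    calc ∫ α in Set.Ioo (0:ℝ) 1, Y ω * (if 1 - α < F (M ω) then (1:ℝ) else 0)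
        = Y ω * ∫ α in Set.Ioo (0:ℝ) 1, (if 1 - α < F (M ω) then (1:ℝ) else 0) :=
          integral_const_mul _ _
      _ = Y ω * F (M ω) := by
          congr 1
          simp_rw [hind]
          rw [setIntegral_indicator measurableSet_Ioi]
          rw [Set.Ioo_inter_Ioi, setIntegral_const]
          have hmax : max (0:ℝ) (1 - F (M ω)) = 1 - F (M ω) := max_eq_right (by linarith)
          rw [hmax]
          simp only [Real.volume_Ioo, smul_eq_mul, mul_one]
          rw [Real.volume_real_Ioo_of_le (by linarith)]
          ring
  -- conclude
  calc (∫ α in Set.Ioo (0:ℝ) 1, CAP α)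
      = ∫ α in Set.Ioo (0:ℝ) 1,
          (∫ ω, Y ω * (if Finv (1 - α) < M ω then (1:ℝ) else 0) ∂P) / ∫ ω, Y ω ∂P := by
        refine integral_congr_ae (Filter.Eventually.of_forall fun α => ?_)
        rw [hCAP]
    _ = (∫ α in Set.Ioo (0:ℝ) 1,
          ∫ ω, Y ω * (if Finv (1 - α) < M ω then (1:ℝ) else 0) ∂P) / ∫ ω, Y ω ∂P :=
        integral_div _ _
    _ = (∫ ω, Y ω * F (M ω) ∂P) / ∫ ω, Y ω ∂P := by rw [key]
end

section
/- If μ̂(X) is auto-calibrated for Y and has continuous distribution F_{μ̂(X)}, then for all α ∈ (0,1), CAP_{Y,μ̂(X)}(α) = 1 − L_{μ̂(X)}(F⁻¹_{μ̂(X)}(1−α)), i.e., the cumulative accuracy profile equals the mirrored Lorenz curve of μ̂(X). -/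
open MeasureTheory ProbabilityTheory

/-- If `μ̂(X)` is auto-calibrated for `Y` and has continuous distribution, then for all
`α ∈ (0,1)`, `CAP_{Y,μ̂(X)}(α) = 1 − L_{μ̂(X)}(F⁻¹(1−α))`: the cumulative accuracy profile
equals the mirrored Lorenz curve of `μ̂(X)`. -/
theorem CAP_eq_mirrored_Lorenz_of_auto_calibrated
    {Ω : Type*} [MeasurableSpace Ω] (P : Measure Ω) [IsProbabilityMeasure P]
    (M Y : Ω → ℝ) (hM : Measurable M) (hY : Integrable Y P)
    (hYpos : ∀ ω, 0 ≤ Y ω) (hEY : 0 < ∫ ω, Y ω ∂P)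
    (hauto : P[Y | MeasurableSpace.comap M Real.measurableSpace] =ᵐ[P] M)
    (F : ℝ → ℝ) (hF : ∀ t, F t = (P {ω | M ω ≤ t}).toReal) (hcont : Continuous F)
    (Finv : ℝ → ℝ) (hFinv : ∀ α, Finv α = sInf {t : ℝ | α ≤ F t})
    (CAP : ℝ → ℝ)
    (hCAP : ∀ α, CAP α =
      (∫ ω, Y ω * (if Finv (1 - α) < M ω then (1 : ℝ) else 0) ∂P) / ∫ ω, Y ω ∂P)
    (L : ℝ → ℝ)
    (hL : ∀ t, L t = (∫ ω, M ω * (if M ω ≤ t then (1 : ℝ) else 0) ∂P) / ∫ ω, M ω ∂P) :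
    ∀ α ∈ Set.Ioo (0 : ℝ) 1, CAP α = 1 - L (Finv (1 - α)) := by
  intro α hα
  have hm : MeasurableSpace.comap M Real.measurableSpace ≤ ‹MeasurableSpace Ω› :=
    hM.comap_le
  set t := Finv (1 - α) with ht
  have hsm : MeasurableSet[MeasurableSpace.comap M Real.measurableSpace] {ω | M ω ≤ t} :=
    ⟨Set.Iic t, measurableSet_Iic, rfl⟩
  have hs : MeasurableSet {ω | M ω ≤ t} := hm _ hsm
  have hMint : Integrable M P := integrable_condExp.congr hauto
  -- set integrals of Y and M over {M ≤ t} agree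
  have h1 : ∫ ω in {ω | M ω ≤ t}, Y ω ∂P = ∫ ω in {ω | M ω ≤ t}, M ω ∂P := by
    rw [← setIntegral_condExp hm hY hsm]
    exact setIntegral_congr_ae hs (hauto.mono fun ω h _ => h)
  -- total expectations agree
  have hEYM : ∫ ω, Y ω ∂P = ∫ ω, M ω ∂P := by
    rw [← integral_condExp hm]
    exact integral_congr_ae hauto
  -- rewrite the two integrands as indicators
  have hind1 : ∀ ω, Y ω * (if t < M ω then (1 : ℝ) else 0)
      = Set.indicator {ω | M ω ≤ t}ᶜ Y ω := by
    intro ω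
    by_cases h : t < M ω <;>
      simp [Set.indicator, h, not_lt.mpr, not_le.mpr, Set.mem_setOf_eq, not_lt, le_of_not_gt]
  have hind2 : ∀ ω, M ω * (if M ω ≤ t then (1 : ℝ) else 0)
      = Set.indicator {ω | M ω ≤ t} M ω := by
    intro ω
    by_cases h : M ω ≤ t <;> simp [Set.indicator, h, Set.mem_setOf_eq]
  have hIY : ∫ ω, Y ω * (if t < M ω then (1 : ℝ) else 0) ∂P
      = ∫ ω in {ω | M ω ≤ t}ᶜ, Y ω ∂P := by
    rw [integral_congr_ae (Filter.Eventually.of_forall hind1),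
      integral_indicator hs.compl]
  have hIM : ∫ ω, M ω * (if M ω ≤ t then (1 : ℝ) else 0) ∂P
      = ∫ ω in {ω | M ω ≤ t}, M ω ∂P := by
    rw [integral_congr_ae (Filter.Eventually.of_forall hind2),
      integral_indicator hs]
  -- split total integral of Y
  have hsplit : ∫ ω in {ω | M ω ≤ t}ᶜ, Y ω ∂P
      = (∫ ω, Y ω ∂P) - ∫ ω in {ω | M ω ≤ t}, Y ω ∂P := by
    have := integral_add_compl hs hY
    linarith
  have hEM : 0 < ∫ ω, M ω ∂P := hEYM ▸ hEY
  rw [hCAP, hL, hIY, hIM, hsplit, h1, hEYM]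
  field_simp
end

section
/- Under auto-calibration of μ̂(X) for Y (with continuous distribution of μ̂(X) and Y non-deterministic), the machine-learning Gini index equals G^eco_{μ̂(X)} divided by (2∫₀¹ CAP_{Y,Y}(α) dα − 1), where G^eco_{μ̂(X)} = 1 − 2∫₀¹ L_{μ̂(X)}(F⁻¹_{μ̂(X)}(α)) dα; in particular the denominator does not depend on μ̂. -/
open MeasureTheory ProbabilityTheory

/-- Under auto-calibration of `μ̂(X)` for `Y` (with continuous distributions and `Y`
non-deterministic), the ML Gini index equals `G^eco_{μ̂(X)}` divided by
`2∫₀¹ CAP_{Y,Y}(α) dα − 1`, where `G^eco = 1 − 2∫₀¹ L(F⁻¹(α)) dα`. -/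
theorem Gini_ML_eq_Gini_eco_div
    {Ω : Type*} [MeasurableSpace Ω] (P : Measure Ω) [IsProbabilityMeasure P]
    (M Y : Ω → ℝ) (hM : Measurable M) (hYm : Measurable Y) (hY : Integrable Y P)
    (hYpos : ∀ ω, 0 ≤ Y ω) (hEY : 0 < ∫ ω, Y ω ∂P)
    (hYnondet : ¬ ∃ c : ℝ, Y =ᵐ[P] fun _ => c)
    (hauto : P[Y | MeasurableSpace.comap M Real.measurableSpace] =ᵐ[P] M)
    -- distribution function and quantile function of μ̂(X):
    (F : ℝ → ℝ) (hF : ∀ t, F t = (P {ω | M ω ≤ t}).toReal) (hcont : Continuous F)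
    (Finv : ℝ → ℝ) (hFinv : ∀ α, Finv α = sInf {t : ℝ | α ≤ F t})
    -- distribution function and quantile function of Y:
    (FY : ℝ → ℝ) (hFY : ∀ t, FY t = (P {ω | Y ω ≤ t}).toReal) (hcontY : Continuous FY)
    (FYinv : ℝ → ℝ) (hFYinv : ∀ α, FYinv α = sInf {t : ℝ | α ≤ FY t})
    -- CAP of μ̂(X) and of Y itself:
    (CAP CAPYY : ℝ → ℝ)
    (hCAP : ∀ α, CAP α =
      (∫ ω, Y ω * (if Finv (1 - α) < M ω then (1 : ℝ) else 0) ∂P) / ∫ ω, Y ω ∂P)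
    (hCAPYY : ∀ α, CAPYY α =
      (∫ ω, Y ω * (if FYinv (1 - α) < Y ω then (1 : ℝ) else 0) ∂P) / ∫ ω, Y ω ∂P)
    -- Lorenz curve of μ̂(X):
    (L : ℝ → ℝ)
    (hL : ∀ t, L t = (∫ ω, M ω * (if M ω ≤ t then (1 : ℝ) else 0) ∂P) / ∫ ω, M ω ∂P)
    -- the two Gini indices:
    (GML Geco : ℝ)
    (hGML : GML = ((∫ α in Set.Ioo (0 : ℝ) 1, CAP α) - 1 / 2) /
      ((∫ α in Set.Ioo (0 : ℝ) 1, CAPYY α) - 1 / 2))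
    (hGeco : Geco = 1 - 2 * ∫ α in Set.Ioo (0 : ℝ) 1, L (Finv α)) :
    GML = Geco / (2 * (∫ α in Set.Ioo (0 : ℝ) 1, CAPYY α) - 1) := by
  classical
  have hm : MeasurableSpace.comap M Real.measurableSpace ≤ ‹MeasurableSpace Ω› :=
    hM.comap_le
  -- M is integrable and a.e. nonnegative, with the same mean as Y
  have hMint : Integrable M P := integrable_condExp.congr hauto
  have hEM : ∫ ω, M ω ∂P = ∫ ω, Y ω ∂P := by
    rw [integral_congr_ae hauto.symm, integral_condExp hm]
  have hMnn : 0 ≤ᵐ[P] M := by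
    have h1 : 0 ≤ᵐ[P] (P[Y | MeasurableSpace.comap M Real.measurableSpace]) :=
      condExp_nonneg (Filter.Eventually.of_forall hYpos)
    filter_upwards [h1, hauto] with ω h1 h2
    rw [← h2]; exact h1
  -- set-integral identities
  have hsm : ∀ t : ℝ,
      MeasurableSet[MeasurableSpace.comap M Real.measurableSpace] {ω | t < M ω} :=
    fun t => ⟨Set.Ioi t, measurableSet_Ioi, rfl⟩
  have hYnum : ∀ t : ℝ, (∫ ω, Y ω * (if t < M ω then (1 : ℝ) else 0) ∂P)
      = ∫ ω in {ω | t < M ω}, M ω ∂P := by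
    intro t
    have hs : MeasurableSet {ω | t < M ω} := hm _ (hsm t)
    have h2 : (∫ ω in {ω | t < M ω}, Y ω ∂P)
        = ∫ ω, Y ω * (if t < M ω then (1 : ℝ) else 0) ∂P := by
      rw [← integral_indicator hs]
      refine integral_congr_ae (Filter.Eventually.of_forall fun ω => ?_)
      by_cases h : t < M ω <;> simp [Set.indicator_apply, Set.mem_setOf_eq, h]
    rw [← h2, ← setIntegral_condExp hm hY (hsm t)]
    exact setIntegral_congr_ae hs (hauto.mono fun ω h _ => h)
  have hMnum : ∀ t : ℝ, (∫ ω, M ω * (if M ω ≤ t then (1 : ℝ) else 0) ∂P)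
      = ∫ ω in {ω | M ω ≤ t}, M ω ∂P := by
    intro t
    have hs : MeasurableSet {ω | M ω ≤ t} := hM measurableSet_Iic
    rw [← integral_indicator hs]
    refine integral_congr_ae (Filter.Eventually.of_forall fun ω => ?_)
    by_cases h : M ω ≤ t <;> simp [Set.indicator_apply, Set.mem_setOf_eq, h]
  have hsplit : ∀ t : ℝ, (∫ ω in {ω | M ω ≤ t}, M ω ∂P) + (∫ ω in {ω | t < M ω}, M ω ∂P)
      = ∫ ω, M ω ∂P := by
    intro t
    have hs : MeasurableSet {ω | M ω ≤ t} := hM measurableSet_Iic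
    have hcompl : {ω | M ω ≤ t}ᶜ = {ω | t < M ω} := by
      ext ω; simp [not_le]
    have h0 := integral_add_compl hs hMint
    rwa [hcompl] at h0
  -- CAP in terms of the Lorenz curve
  have capeq : ∀ α : ℝ, CAP α = 1 - L (Finv (1 - α)) := by
    intro α
    rw [hCAP, hL, hYnum, hMnum, hEM]
    have h1 : (∫ ω in {ω | Finv (1 - α) < M ω}, M ω ∂P)
        = (∫ ω, Y ω ∂P) - ∫ ω in {ω | M ω ≤ Finv (1 - α)}, M ω ∂P := by
      have h0 := hsplit (Finv (1 - α))
      rw [hEM] at h0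
      linarith
    rw [h1, sub_div, div_self hEY.ne']
  -- monotonicity and boundedness of the Lorenz curve
  have hnumnn : ∀ t : ℝ, 0 ≤ ∫ ω in {ω | M ω ≤ t}, M ω ∂P := fun t =>
    setIntegral_nonneg_of_ae hMnn
  have hnumle : ∀ t : ℝ, (∫ ω in {ω | M ω ≤ t}, M ω ∂P) ≤ ∫ ω, M ω ∂P := fun t =>
    setIntegral_le_integral hMint hMnn
  have hLnn : ∀ t : ℝ, 0 ≤ L t := by
    intro t
    rw [hL, hMnum, hEM]
    exact div_nonneg (hnumnn t) hEY.le
  have hLle : ∀ t : ℝ, L t ≤ 1 := by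
    intro t
    rw [hL, hMnum, hEM, div_le_one hEY]
    calc (∫ ω in {ω | M ω ≤ t}, M ω ∂P) ≤ ∫ ω, M ω ∂P := hnumle t
      _ = ∫ ω, Y ω ∂P := hEM
  have hLmono : Monotone L := by
    intro a b hab
    rw [hL, hL, hMnum, hMnum, hEM]
    have hnum : (∫ ω in {ω | M ω ≤ a}, M ω ∂P) ≤ ∫ ω in {ω | M ω ≤ b}, M ω ∂P := by
      apply setIntegral_mono_set hMint.integrableOn (ae_restrict_of_ae hMnn)
      exact HasSubset.Subset.eventuallyLE fun ω h => le_trans h hab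
    exact div_le_div_of_nonneg_right hnum hEY.le
  -- monotonicity of F
  have hFmono : Monotone F := by
    intro a b hab
    rw [hF, hF]
    exact ENNReal.toReal_mono (measure_ne_top P _)
      (measure_mono fun ω (h : M ω ≤ a) => le_trans h hab)
  -- tail behaviour of F
  have hF1 : ∀ β : ℝ, β < 1 → ∃ T : ℝ, β ≤ F T := by
    intro β hβ
    have hmono : Monotone fun n : ℕ => {ω | M ω ≤ (n : ℝ)} := by
      intro a b hab ω (h : M ω ≤ (a : ℝ))
      exact le_trans h (by exact_mod_cast Nat.cast_le.mpr hab)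
    have hunion : (⋃ n : ℕ, {ω | M ω ≤ (n : ℝ)}) = Set.univ := by
      ext ω
      simp only [Set.mem_iUnion, Set.mem_univ, iff_true, Set.mem_setOf_eq]
      exact exists_nat_ge (M ω)
    have h1 : Filter.Tendsto (fun n : ℕ => P {ω | M ω ≤ (n : ℝ)}) Filter.atTop
        (nhds 1) := by
      have h0 := tendsto_measure_iUnion_atTop (μ := P) hmono
      rwa [hunion, measure_univ] at h0
    have h2 : Filter.Tendsto (fun n : ℕ => (P {ω | M ω ≤ (n : ℝ)}).toReal) Filter.atTop
        (nhds 1) := by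
      have h0 := (ENNReal.tendsto_toReal (a := 1) (by simp)).comp h1
      exact h0
    have h3 : ∀ᶠ n : ℕ in Filter.atTop, β < (P {ω | M ω ≤ (n : ℝ)}).toReal :=
      h2.eventually (eventually_gt_nhds hβ)
    obtain ⟨n, hn⟩ := h3.exists
    exact ⟨(n : ℝ), by rw [hF]; exact hn.le⟩
  have hF0 : ∀ α : ℝ, 0 < α → ∃ T : ℝ, F T < α := by
    intro α hα
    have hanti : Antitone fun n : ℕ => {ω | M ω ≤ -(n : ℝ)} := by
      intro a b hab ω (h : M ω ≤ -(b : ℝ))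
      refine le_trans h (neg_le_neg ?_)
      exact_mod_cast Nat.cast_le.mpr hab
    have hinter : (⋂ n : ℕ, {ω | M ω ≤ -(n : ℝ)}) = ∅ := by
      ext ω
      simp only [Set.mem_iInter, Set.mem_empty_iff_false, iff_false, not_forall,
        Set.mem_setOf_eq, not_le]
      obtain ⟨n, hn⟩ := exists_nat_gt (-(M ω))
      exact ⟨n, by linarith⟩
    have h1 : Filter.Tendsto (fun n : ℕ => P {ω | M ω ≤ -(n : ℝ)}) Filter.atTop
        (nhds 0) := by
      have h0 := tendsto_measure_iInter_atTop (μ := P)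
        (s := fun n : ℕ => {ω | M ω ≤ -(n : ℝ)})
        (fun n => ((hM measurableSet_Iic :
          MeasurableSet {ω | M ω ≤ -(n : ℝ)})).nullMeasurableSet)
        hanti ⟨0, measure_ne_top P _⟩
      rwa [hinter, measure_empty] at h0
    have h2 : Filter.Tendsto (fun n : ℕ => (P {ω | M ω ≤ -(n : ℝ)}).toReal) Filter.atTop
        (nhds 0) := by
      have h0 := (ENNReal.tendsto_toReal (a := 0) (by simp)).comp h1
      exact h0
    have h3 : ∀ᶠ n : ℕ in Filter.atTop, (P {ω | M ω ≤ -(n : ℝ)}).toReal < α :=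
      h2.eventually (eventually_lt_nhds hα)
    obtain ⟨n, hn⟩ := h3.exists
    exact ⟨-(n : ℝ), by rw [hF]; exact hn⟩
  -- Finv is monotone on (0,1)
  have hFinvMono : MonotoneOn Finv (Set.Ioo (0 : ℝ) 1) := by
    intro a ha b hb hab
    rw [hFinv, hFinv]
    obtain ⟨T0, hT0⟩ := hF0 a ha.1
    obtain ⟨T1, hT1⟩ := hF1 b hb.2
    refine csInf_le_csInf ⟨T0, fun t ht => ?_⟩ ⟨T1, hT1⟩ (fun t ht => le_trans hab ht)
    by_contra hlt
    push_neg at hlt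
    have : F t < a := lt_of_le_of_lt (hFmono hlt.le) hT0
    exact absurd ht (by simpa [Set.mem_setOf_eq, not_le] using this)
  -- the composed function is monotone on (0,1), hence integrable there
  have hgmono : MonotoneOn (fun α => L (Finv α)) (Set.Ioo (0 : ℝ) 1) :=
    hLmono.comp_monotoneOn hFinvMono
  have hgmeas : AEMeasurable (fun α => L (Finv α))
      (volume.restrict (Set.Ioo (0 : ℝ) 1)) :=
    aemeasurable_restrict_of_monotoneOn measurableSet_Ioo hgmono
  have hgint : IntegrableOn (fun α => L (Finv α)) (Set.Ioo (0 : ℝ) 1) volume := by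
    apply Integrable.mono' (g := fun _ => (1 : ℝ))
      ((integrableOn_const_iff).mpr (Or.inr (by simp [Real.volume_Ioo])))
      hgmeas.aestronglyMeasurable
    refine Filter.Eventually.of_forall fun α => ?_
    rw [Real.norm_eq_abs, abs_of_nonneg (hLnn _)]
    exact hLle _
  -- reflection identity on (0,1)
  have refl1 : ∀ g : ℝ → ℝ, (∫ α in Set.Ioo (0 : ℝ) 1, g (1 - α))
      = ∫ α in Set.Ioo (0 : ℝ) 1, g α := by
    intro g
    rw [← integral_Ioc_eq_integral_Ioo, ← intervalIntegral.integral_of_le zero_le_one,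
      ← integral_Ioc_eq_integral_Ioo, ← intervalIntegral.integral_of_le zero_le_one]
    rw [intervalIntegral.integral_comp_sub_left g 1]
    norm_num
  -- the key identity
  have key : (∫ α in Set.Ioo (0 : ℝ) 1, CAP α)
      = 1 - ∫ α in Set.Ioo (0 : ℝ) 1, L (Finv α) := by
    have h1 : (∫ α in Set.Ioo (0 : ℝ) 1, CAP α)
        = ∫ α in Set.Ioo (0 : ℝ) 1, (fun β => 1 - L (Finv β)) (1 - α) :=
      integral_congr_ae (Filter.Eventually.of_forall fun α => capeq α)
    rw [h1, refl1 (fun β => 1 - L (Finv β)),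
      integral_sub ((integrableOn_const_iff (C := (1 : ℝ)) (s := Set.Ioo (0 : ℝ) 1)
        (μ := volume)).mpr (Or.inr (by simp [Real.volume_Ioo]))) hgint,
      setIntegral_const]
    simp [Real.volume_Ioo]
  -- final arithmetic
  rw [hGML, hGeco, key]
  set I := ∫ α in Set.Ioo (0 : ℝ) 1, L (Finv α)
  set c := ∫ α in Set.Ioo (0 : ℝ) 1, CAPYY α
  have h2 : (1 - I - 1 / 2 : ℝ) = (1 - 2 * I) / 2 := by ring
  rw [h2, div_div]
  congr 1
  ring
end

section
/- Let μ̂(X) be auto-calibrated for Y and let μ†(X) = E[Y|X]. Let Z be an independent copy of X. Then E[|μ̂(X) − μ̂(Z)|] ≤ E[|μ†(X) − μ†(Z)|], i.e., the economic Gini numerator is maximized by the true regression function among auto-calibrated regression functions. -/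
open MeasureTheory ProbabilityTheory

/-- Let `μ̂(X)` be auto-calibrated for `Y`, `μ†(X) = E[Y|X]`, and `Z` an independent copy
of `X`. Then `E[|μ̂(X) − μ̂(Z)|] ≤ E[|μ†(X) − μ†(Z)|]`: the economic Gini numerator is
maximized by the true regression function among auto-calibrated regression functions. -/
theorem Gini_numerator_maximized_by_true_regression
    {Ω E : Type*} [MeasurableSpace Ω] [MeasurableSpace E]
    (P : Measure Ω) [IsProbabilityMeasure P]
    (X Z : Ω → E) (Y : Ω → ℝ)
    (hX : Measurable X) (hZ : Measurable Z) (hY : Integrable Y P)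
    (hindep : IndepFun X Z P) (hid : IdentDistrib X Z P P)
    -- μ† as a measurable function of the covariates, a version of E[Y|X]:
    (gdag : E → ℝ) (hgdag : Measurable gdag)
    (hver : (fun ω => gdag (X ω)) =ᵐ[P] P[Y | MeasurableSpace.comap X inferInstance])
    -- μ̂ as a measurable function of the covariates, auto-calibrated for Y:
    (g : E → ℝ) (hg : Measurable g)
    (hauto : P[Y | MeasurableSpace.comap (fun ω => g (X ω)) Real.measurableSpace]
      =ᵐ[P] fun ω => g (X ω))
    (hint1 : Integrable (fun ω => |g (X ω) - g (Z ω)|) P)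
    (hint2 : Integrable (fun ω => |gdag (X ω) - gdag (Z ω)|) P) :
    (∫ ω, |g (X ω) - g (Z ω)| ∂P) ≤ ∫ ω, |gdag (X ω) - gdag (Z ω)| ∂P := by
  have hgX_meas : Measurable fun ω => g (X ω) := hg.comp hX
  have hgdX_meas : Measurable fun ω => gdag (X ω) := hgdag.comp hX
  have hmle : MeasurableSpace.comap (fun ω => g (X ω)) Real.measurableSpace
      ≤ MeasurableSpace.comap X inferInstance := by
    rw [show (fun ω => g (X ω)) = g ∘ X from rfl, ← MeasurableSpace.comap_comp]
    exact MeasurableSpace.comap_mono hg.comap_le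
  have hm0 : MeasurableSpace.comap (fun ω => g (X ω)) Real.measurableSpace
      ≤ (inferInstance : MeasurableSpace Ω) := hgX_meas.comap_le
  -- integrability of g ∘ X and gdag ∘ X
  have hintgX : Integrable (fun ω => g (X ω)) P := integrable_condExp.congr hauto
  have hintgdX : Integrable (fun ω => gdag (X ω)) P := integrable_condExp.congr hver.symm
  -- g ∘ X is a conditional expectation of gdag ∘ X
  have hcore : (fun ω => g (X ω)) =ᵐ[P] P[(fun ω => gdag (X ω)) | MeasurableSpace.comap (fun ω => g (X ω)) Real.measurableSpace] := by
    have h1 : P[(fun ω => gdag (X ω)) | MeasurableSpace.comap (fun ω => g (X ω)) Real.measurableSpace]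
        =ᵐ[P] P[P[Y | MeasurableSpace.comap X inferInstance] | MeasurableSpace.comap (fun ω => g (X ω)) Real.measurableSpace] := condExp_congr_ae hver
    have h2 : P[P[Y | MeasurableSpace.comap X inferInstance] | MeasurableSpace.comap (fun ω => g (X ω)) Real.measurableSpace] =ᵐ[P] P[Y | MeasurableSpace.comap (fun ω => g (X ω)) Real.measurableSpace] :=
      condExp_condExp_of_le hmle hX.comap_le
    exact hauto.symm.trans ((h2.symm.trans h1.symm))
  -- key inequality: for every constant c
  have key : ∀ c : ℝ, (∫ ω, |g (X ω) - c| ∂P) ≤ ∫ ω, |gdag (X ω) - c| ∂P := by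
    intro c
    have hsub : (fun ω => g (X ω) - c) =ᵐ[P] P[(fun ω => gdag (X ω) - c) | MeasurableSpace.comap (fun ω => g (X ω)) Real.measurableSpace] := by
      have h3 : P[(fun ω => gdag (X ω)) - (fun _ => c) | MeasurableSpace.comap (fun ω => g (X ω)) Real.measurableSpace]
          =ᵐ[P] P[(fun ω => gdag (X ω)) | MeasurableSpace.comap (fun ω => g (X ω)) Real.measurableSpace] - P[(fun _ : Ω => c) | MeasurableSpace.comap (fun ω => g (X ω)) Real.measurableSpace] :=
        condExp_sub hintgdX (integrable_const c) _
      have h4 : P[(fun _ : Ω => c) | MeasurableSpace.comap (fun ω => g (X ω)) Real.measurableSpace] = fun _ => c := condExp_const hm0 c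
      filter_upwards [hcore, h3] with ω h5 h6
      have : ((fun ω => gdag (X ω)) - (fun _ : Ω => c)) = fun ω => gdag (X ω) - c := rfl
      rw [← this]
      simp only [h6, Pi.sub_apply, h4, h5]
    calc (∫ ω, |g (X ω) - c| ∂P)
        = ∫ ω, |(P[(fun ω => gdag (X ω) - c) | MeasurableSpace.comap (fun ω => g (X ω)) Real.measurableSpace]) ω| ∂P := by
          refine integral_congr_ae ?_
          filter_upwards [hsub] with ω h; rw [h]
      _ ≤ ∫ ω, |gdag (X ω) - c| ∂P := integral_abs_condExp_le _
  -- transfer everything to ν := P.map X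
  set ν : Measure E := P.map X with hν_def
  haveI : IsProbabilityMeasure ν := Measure.isProbabilityMeasure_map hX.aemeasurable
  have hgν : Integrable g ν :=
    (integrable_map_measure hg.aestronglyMeasurable hX.aemeasurable).mpr hintgX
  have hgdν : Integrable gdag ν :=
    (integrable_map_measure hgdag.aestronglyMeasurable hX.aemeasurable).mpr hintgdX
  have key' : ∀ c : ℝ, (∫ x, |g x - c| ∂ν) ≤ ∫ x, |gdag x - c| ∂ν := by
    intro c
    rw [hν_def, integral_map hX.aemeasurable (f := fun x => |g x - c|) ((hg.sub measurable_const).abs).aestronglyMeasurable,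
      integral_map hX.aemeasurable (f := fun x => |gdag x - c|) ((hgdag.sub measurable_const).abs).aestronglyMeasurable]
    exact key c
  -- joint distribution is the product
  have hjoint : P.map (fun ω => (X ω, Z ω)) = ν.prod ν := by
    rw [(indepFun_iff_map_prod_eq_prod_map_map hX.aemeasurable hZ.aemeasurable).mp hindep,
      ← hid.map_eq, ← hν_def]
  have hpair : AEMeasurable (fun ω => (X ω, Z ω)) P := (hX.prodMk hZ).aemeasurable
  have hmg : Measurable fun p : E × E => |g p.1 - g p.2| :=
    ((hg.comp measurable_fst).sub (hg.comp measurable_snd)).abs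
  have hmgd : Measurable fun p : E × E => |gdag p.1 - gdag p.2| :=
    ((hgdag.comp measurable_fst).sub (hgdag.comp measurable_snd)).abs
  have hmmid : Measurable fun p : E × E => |gdag p.2 - g p.1| :=
    ((hgdag.comp measurable_snd).sub (hg.comp measurable_fst)).abs
  have I1 : Integrable (fun p : E × E => |g p.1 - g p.2|) (ν.prod ν) := by
    rw [← hjoint]
    exact (integrable_map_measure hmg.aestronglyMeasurable hpair).mpr hint1
  have I2 : Integrable (fun p : E × E => |gdag p.1 - gdag p.2|) (ν.prod ν) := by
    rw [← hjoint]
    exact (integrable_map_measure hmgd.aestronglyMeasurable hpair).mpr hint2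
  have Imid : Integrable (fun p : E × E => |gdag p.2 - g p.1|) (ν.prod ν) := by
    have hb : Integrable (fun p : E × E => |gdag p.2| + |g p.1|) (ν.prod ν) := by
      have hsnd : (ν.prod ν).map Prod.snd = ν := by
        rw [Measure.map_snd_prod, measure_univ, one_smul]
      have hfst : (ν.prod ν).map Prod.fst = ν := by
        rw [Measure.map_fst_prod, measure_univ, one_smul]
      have h1 : Integrable (fun p : E × E => |gdag p.2|) (ν.prod ν) := by
        have h := hgdν.abs
        rw [← hsnd] at h
        exact h.comp_measurable measurable_snd
      have h2 : Integrable (fun p : E × E => |g p.1|) (ν.prod ν) := by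
        have h := hgν.abs
        rw [← hfst] at h
        exact h.comp_measurable measurable_fst
      exact h1.add h2
    refine hb.mono hmmid.aestronglyMeasurable ?_
    filter_upwards with p
    simp only [Real.norm_eq_abs, abs_abs]
    calc |gdag p.2 - g p.1| ≤ |gdag p.2| + |g p.1| := abs_sub _ _
      _ ≤ |(|gdag p.2| + |g p.1|)| := le_abs_self _
  -- main chain
  calc (∫ ω, |g (X ω) - g (Z ω)| ∂P)
      = ∫ p, |g p.1 - g p.2| ∂(ν.prod ν) := by
        rw [← hjoint, integral_map hpair hmg.aestronglyMeasurable]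
    _ = ∫ x, ∫ z, |g x - g z| ∂ν ∂ν := integral_prod _ I1
    _ ≤ ∫ x, ∫ z, |gdag z - g x| ∂ν ∂ν := by
        refine integral_mono I1.integral_prod_left Imid.integral_prod_left fun x => ?_
        have : (∫ z, |g x - g z| ∂ν) = ∫ z, |g z - g x| ∂ν := by
          simp_rw [abs_sub_comm (g x)]
        rw [this]
        exact key' (g x)
    _ = ∫ z, ∫ x, |gdag z - g x| ∂ν ∂ν := integral_integral_swap Imid
    _ ≤ ∫ z, ∫ x, |gdag x - gdag z| ∂ν ∂ν := by
        refine integral_mono Imid.integral_prod_right I2.integral_prod_right fun z => ?_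
        have : (∫ x, |gdag z - g x| ∂ν) = ∫ x, |g x - gdag z| ∂ν := by
          simp_rw [abs_sub_comm (gdag z)]
        rw [this]
        exact key' (gdag z)
    _ = ∫ x, ∫ z, |gdag x - gdag z| ∂ν ∂ν := (integral_integral_swap I2).symm
    _ = ∫ p, |gdag p.1 - gdag p.2| ∂(ν.prod ν) := (integral_prod _ I2).symm
    _ = ∫ ω, |gdag (X ω) - gdag (Z ω)| ∂P := by
        rw [← hjoint, integral_map hpair hmgd.aestronglyMeasurable]
end

section
/- Let μ̂(X) be auto-calibrated for Y with μ†(X) = E[Y|X], and let Z be an independent copy of X. If E[|μ̂(X) − μ̂(Z)|] = E[|μ†(X) − μ†(Z)|], then μ̂(X) = μ†(X) almost surely. Consequently, the Gini index gives a strictly consistent scoring rule on the class of auto-calibrated regression functions: G^ML_{Y,μ†(X)} > G^ML_{Y,μ̂(X)} unless μ̂(X) = μ†(X) a.s. -/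
open MeasureTheory ProbabilityTheory
open scoped ENNReal

noncomputable def gsgn : ℝ → ℝ := fun t => if 0 < t then 1 else if t < 0 then -1 else 0

lemma gsgn_meas : Measurable gsgn := by
  unfold gsgn
  exact Measurable.ite (measurableSet_lt measurable_const measurable_id) measurable_const
    (Measurable.ite (measurableSet_lt measurable_id measurable_const) measurable_const
      measurable_const)

lemma gsgn_abs_le (t : ℝ) : |gsgn t| ≤ 1 := by
  unfold gsgn; split_ifs <;> norm_num

lemma gsgn_mul (t : ℝ) : t * gsgn t = |t| := by
  unfold gsgn; split_ifs with h1 h2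
  · rw [abs_of_pos h1]; ring
  · rw [abs_of_neg h2]; ring
  · have : t = 0 := le_antisymm (not_lt.mp h1) (not_lt.mp h2)
    simp [this]

lemma gsgn_neg (t : ℝ) : gsgn (-t) = - gsgn t := by
  unfold gsgn
  rcases lt_trichotomy t 0 with h | h | h
  · simp only [if_pos (by linarith : (0:ℝ) < -t), if_neg (not_lt.mpr h.le), if_pos h]; ring
  · simp [h]
  · simp only [if_neg (by linarith : ¬ (0:ℝ) < -t), if_pos h,
      if_pos (by linarith : -t < 0)]

section aux
variable {E : Type*} [MeasurableSpace E]

/-- From the a.e. pair comonotonicity condition, `gd` is a.e. a measurable function of `g`. -/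
lemma factor_of_pair_mono (ν : Measure E) [IsProbabilityMeasure ν]
    (g gd : E → ℝ) (hg : Measurable g) (hgd : Measurable gd)
    (hpair : ∀ᵐ p ∂(ν.prod ν), g p.1 ≤ g p.2 → gd p.1 ≤ gd p.2) :
    ∃ w : ℝ → ℝ, Measurable w ∧ gd =ᵐ[ν] fun x => w (g x) := by
  classical
  set u : E → ℝ≥0∞ := fun x => ENNReal.ofReal (Real.arctan (gd x) + 2) with hu_def
  have hpos : ∀ r : ℝ, 0 < Real.arctan r + 2 := by
    intro r
    have h1 := Real.neg_pi_div_two_lt_arctan r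
    have h2 := Real.pi_lt_d2
    linarith
  have hu_meas : Measurable u :=
    ENNReal.measurable_ofReal.comp ((Real.continuous_arctan.measurable.comp hgd).add measurable_const)
  have hu_mono : ∀ a b : ℝ, a ≤ b →
      ENNReal.ofReal (Real.arctan a + 2) ≤ ENNReal.ofReal (Real.arctan b + 2) :=
    fun a b hab => ENNReal.ofReal_le_ofReal
      (by have := Real.arctan_strictMono.monotone hab; linarith)
  -- inverse of the embedding
  set τinv : ℝ≥0∞ → ℝ := fun e => Real.tan (e.toReal - 2) with hτinv_def
  have hτinv : ∀ r : ℝ, τinv (ENNReal.ofReal (Real.arctan r + 2)) = r := by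
    intro r
    simp only [hτinv_def, ENNReal.toReal_ofReal (hpos r).le, add_sub_cancel_right,
      Real.tan_arctan]
  have htan_meas : Measurable Real.tan := by
    have h : Real.tan = fun x => Real.sin x / Real.cos x := funext fun x => Real.tan_eq_sin_div_cos x
    rw [h]
    exact Real.measurable_sin.div Real.measurable_cos
  have hτinv_meas : Measurable τinv :=
    htan_meas.comp (ENNReal.measurable_toReal.sub measurable_const)
  -- the monotone envelope
  set h : ℝ → ℝ≥0∞ := fun t => essInf u (ν.restrict {x | t ≤ g x}) with hh_def
  have hh_mono : Monotone h := by
    intro t t' htt'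
    exact essInf_antitone_measure (Measure.absolutelyContinuous_of_le
      (Measure.restrict_mono (fun x hx => le_trans htt' hx) le_rfl))
  have hh_meas : Measurable h := hh_mono.measurable
  -- Claim 1 : a.e. u x ≤ h (g x)
  have claim1 : ∀ᵐ x ∂ν, u x ≤ h (g x) := by
    have hp2 := Measure.ae_ae_of_ae_prod hpair
    filter_upwards [hp2] with x hx
    have hSmeas : MeasurableSet {y | g x ≤ g y} := measurableSet_le measurable_const hg
    have hres : ∀ᵐ y ∂(ν.restrict {y | g x ≤ g y}), u x ≤ u y := by
      have h1 : ∀ᵐ y ∂(ν.restrict {y | g x ≤ g y}), g x ≤ g y → gd x ≤ gd y :=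
        ae_restrict_of_ae hx
      have h2 : ∀ᵐ y ∂(ν.restrict {y | g x ≤ g y}), g x ≤ g y := ae_restrict_mem hSmeas
      filter_upwards [h1, h2] with y hy1 hy2
      exact hu_mono _ _ (hy1 hy2)
    exact le_essInf_of_ae_le _ hres
  -- Claim 2 : a.e. ¬ (u x < h (g x))
  have claim2 : ∀ᵐ x ∂ν, ¬ (u x < h (g x)) := by
    have hCnull : ∀ q : ℚ, ν {x | u x < ((Real.toNNReal (q:ℝ)) : ℝ≥0∞) ∧
        ((Real.toNNReal (q:ℝ)) : ℝ≥0∞) ≤ h (g x)} = 0 := by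
      intro q
      set c : ℝ≥0∞ := ((Real.toNNReal (q:ℝ)) : ℝ≥0∞) with hc_def
      set C : Set E := {x | u x < c ∧ c ≤ h (g x)} with hC_def
      have hCmeas : MeasurableSet C := by
        refine MeasurableSet.inter ?_ ?_
        · exact hu_meas measurableSet_Iio
        · exact (hh_meas.comp hg) measurableSet_Ici
      -- slice measure zero
      have hslice : ∀ x ∈ C, ν {y | g x ≤ g y ∧ u y < c} = 0 := by
        intro x hx
        have h0 : (ν.restrict {y | g x ≤ g y}) {y | u y < c} = 0 := by
          have hinf := meas_lt_essInf (μ := ν.restrict {y | g x ≤ g y}) (f := u)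
          refine measure_mono_null ?_ hinf
          intro y hy
          exact lt_of_lt_of_le hy hx.2
        rw [Measure.restrict_apply (show MeasurableSet {y | u y < c} from hu_meas measurableSet_Iio)] at h0
        refine measure_mono_null ?_ h0
        intro y hy
        exact ⟨hy.2, hy.1⟩
      set S : Set (E × E) := {p | p.1 ∈ C ∧ g p.1 ≤ g p.2 ∧ u p.2 < c} with hS_def
      set S' : Set (E × E) := {p | p.2 ∈ C ∧ g p.2 ≤ g p.1 ∧ u p.1 < c} with hS'_def
      have hSmeas : MeasurableSet S := by
        refine MeasurableSet.inter (hCmeas.preimage measurable_fst) (MeasurableSet.inter ?_ ?_)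
        · exact measurableSet_le (hg.comp measurable_fst) (hg.comp measurable_snd)
        · exact (hu_meas.comp measurable_snd) measurableSet_Iio
      have hS'meas : MeasurableSet S' := by
        refine MeasurableSet.inter (hCmeas.preimage measurable_snd) (MeasurableSet.inter ?_ ?_)
        · exact measurableSet_le (hg.comp measurable_snd) (hg.comp measurable_fst)
        · exact (hu_meas.comp measurable_fst) measurableSet_Iio
      have hslice' : ∀ x, ν {y | x ∈ C ∧ g x ≤ g y ∧ u y < c} = 0 := by
        intro x
        by_cases hx : x ∈ C
        · refine measure_mono_null ?_ (hslice x hx)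
          intro y hy; exact ⟨hy.2.1, hy.2.2⟩
        · have : {y | x ∈ C ∧ g x ≤ g y ∧ u y < c} = ∅ := by
            ext y; simp [hx]
          simp [this]
      have hS0 : (ν.prod ν) S = 0 := by
        rw [Measure.prod_apply hSmeas]
        have : ∀ x, ν (Prod.mk x ⁻¹' S) = 0 := by
          intro x
          refine measure_mono_null ?_ (hslice' x)
          intro y hy; exact hy
        simp [this]
      have hS'0 : (ν.prod ν) S' = 0 := by
        rw [Measure.prod_apply_symm hS'meas]
        have : ∀ y, ν ((fun x => (x, y)) ⁻¹' S') = 0 := by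
          intro y
          refine measure_mono_null ?_ (hslice' y)
          intro x hx; exact hx
        simp [this]
      have hcover : C ×ˢ C ⊆ S ∪ S' := by
        rintro ⟨x, y⟩ ⟨hx, hy⟩
        rcases le_total (g x) (g y) with hle | hle
        · exact Or.inl ⟨hx, hle, hy.1⟩
        · exact Or.inr ⟨hy, hle, hx.1⟩
      have hprod : ν C * ν C = 0 := by
        rw [← Measure.prod_prod]
        exact measure_mono_null hcover (measure_union_null hS0 hS'0)
      rcases mul_eq_zero.mp hprod with h | h <;> exact h
    have htotal : ν {x | u x < h (g x)} = 0 := by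
      refine measure_mono_null ?_ (measure_iUnion_null (fun q : ℚ => hCnull q))
      intro x hx
      obtain ⟨q, _, h1, h2⟩ := ENNReal.lt_iff_exists_rat_btwn.mp hx
      exact Set.mem_iUnion.mpr ⟨q, h1, h2.le⟩
    rw [ae_iff]
    simpa using htotal
  refine ⟨fun t => τinv (h t), hτinv_meas.comp hh_meas, ?_⟩
  filter_upwards [claim1, claim2] with x h1 h2
  have huh : u x = h (g x) := le_antisymm h1 (not_lt.mp h2)
  calc gd x = τinv (u x) := (hτinv (gd x)).symm
    _ = τinv (h (g x)) := by rw [huh]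

lemma gini_integral_key (ν : Measure E) [IsProbabilityMeasure ν]
    (g gd : E → ℝ) (hg : Measurable g) (hgd : Measurable gd)
    (hgi : Integrable g ν) (hgdi : Integrable gd ν)
    (hId : Integrable (fun p : E × E => |gd p.1 - gd p.2|) (ν.prod ν))
    (horth : ∀ k : ℝ → ℝ, Measurable k → (∀ t, |k t| ≤ 1) →
      ∫ x, (gd x - g x) * k (g x) ∂ν = 0) :
    (∫ p, |g p.1 - g p.2| ∂(ν.prod ν)) ≤ (∫ p, |gd p.1 - gd p.2| ∂(ν.prod ν)) ∧
    ((∫ p, |g p.1 - g p.2| ∂(ν.prod ν)) = (∫ p, |gd p.1 - gd p.2| ∂(ν.prod ν)) →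
      ∀ᵐ p ∂(ν.prod ν), g p.1 ≤ g p.2 → gd p.1 ≤ gd p.2) := by
  classical
  set k : ℝ → ℝ := fun t => ∫ y, gsgn (t - g y) ∂ν with hk_def
  have hk_meas : Measurable k := by
    have hsm : StronglyMeasurable (fun p : ℝ × E => gsgn (p.1 - g p.2)) :=
      (gsgn_meas.comp (measurable_fst.sub (hg.comp measurable_snd))).stronglyMeasurable
    exact hsm.integral_prod_right'.measurable
  have hk_bd : ∀ t, |k t| ≤ 1 := by
    intro t
    have := norm_integral_le_of_norm_le_const (μ := ν)
      (f := fun y => gsgn (t - g y)) (C := 1)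
      (Filter.Eventually.of_forall (fun y => by
        simpa [Real.norm_eq_abs] using gsgn_abs_le (t - g y)))
    simpa [Real.norm_eq_abs, measure_univ] using this
  -- integrability of first/second coordinate compositions
  have hfst : ∀ (f : E → ℝ), Measurable f → Integrable f ν →
      Integrable (fun p : E × E => f p.1) (ν.prod ν) := by
    intro f hf hfi
    have h1 : Integrable f ((ν.prod ν).map Prod.fst) := by
      rw [Measure.map_fst_prod]
      simpa [measure_univ] using hfi
    have := (integrable_map_measure hf.aestronglyMeasurable measurable_fst.aemeasurable).mp h1
    simpa [Function.comp_def] using this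
  have hsnd : ∀ (f : E → ℝ), Measurable f → Integrable f ν →
      Integrable (fun p : E × E => f p.2) (ν.prod ν) := by
    intro f hf hfi
    have h1 : Integrable f ((ν.prod ν).map Prod.snd) := by
      rw [Measure.map_snd_prod]
      simpa [measure_univ] using hfi
    have := (integrable_map_measure hf.aestronglyMeasurable measurable_snd.aemeasurable).mp h1
    simpa [Function.comp_def] using this
  have hmuls1 : ∀ (f : E → ℝ), Measurable f → Integrable f ν →
      Integrable (fun p : E × E => f p.1 * gsgn (g p.1 - g p.2)) (ν.prod ν) := by
    intro f hf hfi
    refine Integrable.mono' ((hfst f hf hfi).abs) ?_ ?_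
    · exact ((hf.comp measurable_fst).mul (gsgn_meas.comp
        ((hg.comp measurable_fst).sub (hg.comp measurable_snd)))).aestronglyMeasurable
    · refine Filter.Eventually.of_forall (fun p => ?_)
      rw [Real.norm_eq_abs, abs_mul]
      calc |f p.1| * |gsgn (g p.1 - g p.2)| ≤ |f p.1| * 1 :=
            mul_le_mul_of_nonneg_left (gsgn_abs_le _) (abs_nonneg _)
        _ = |f p.1| := mul_one _
  have hmuls2 : ∀ (f : E → ℝ), Measurable f → Integrable f ν →
      Integrable (fun p : E × E => f p.2 * gsgn (g p.1 - g p.2)) (ν.prod ν) := by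
    intro f hf hfi
    refine Integrable.mono' ((hsnd f hf hfi).abs) ?_ ?_
    · exact ((hf.comp measurable_snd).mul (gsgn_meas.comp
        ((hg.comp measurable_fst).sub (hg.comp measurable_snd)))).aestronglyMeasurable
    · refine Filter.Eventually.of_forall (fun p => ?_)
      rw [Real.norm_eq_abs, abs_mul]
      calc |f p.2| * |gsgn (g p.1 - g p.2)| ≤ |f p.2| * 1 :=
            mul_le_mul_of_nonneg_left (gsgn_abs_le _) (abs_nonneg _)
        _ = |f p.2| := mul_one _
  -- key Fubini identity
  have hkey : ∀ (f : E → ℝ), Measurable f → Integrable f ν →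
      ∫ p, (f p.1 - f p.2) * gsgn (g p.1 - g p.2) ∂(ν.prod ν)
        = 2 * ∫ x, f x * k (g x) ∂ν := by
    intro f hf hfi
    have i1 := hmuls1 f hf hfi
    have i2 := hmuls2 f hf hfi
    have hsplit : ∫ p, (f p.1 - f p.2) * gsgn (g p.1 - g p.2) ∂(ν.prod ν)
        = (∫ p, f p.1 * gsgn (g p.1 - g p.2) ∂(ν.prod ν))
          - ∫ p, f p.2 * gsgn (g p.1 - g p.2) ∂(ν.prod ν) := by
      rw [← integral_sub i1 i2]
      congr 1
      funext p
      ring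
    have e1 : ∫ p, f p.1 * gsgn (g p.1 - g p.2) ∂(ν.prod ν) = ∫ x, f x * k (g x) ∂ν := by
      rw [integral_prod _ i1]
      congr 1
      funext x
      show (∫ y, f x * gsgn (g x - g y) ∂ν) = f x * k (g x)
      rw [integral_const_mul]
    have e2 : ∫ p, f p.2 * gsgn (g p.1 - g p.2) ∂(ν.prod ν) = - ∫ x, f x * k (g x) ∂ν := by
      rw [integral_prod_symm _ i2]
      rw [← integral_neg]
      congr 1
      funext y
      show (∫ x, f y * gsgn (g x - g y) ∂ν) = -(f y * k (g y))
      rw [integral_const_mul]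
      have : ∫ x, gsgn (g x - g y) ∂ν = - k (g y) := by
        rw [hk_def]
        simp only []
        rw [← integral_neg]
        congr 1
        funext x
        rw [show g x - g y = -(g y - g x) by ring, gsgn_neg]
      rw [this]
      ring
    rw [hsplit, e1, e2]
    ring
  have hKg : ∀ x, (∫ y, gsgn (g x - g y) ∂ν) = k (g x) := fun x => rfl
  -- the two main identities
  have hJg : ∫ p, |g p.1 - g p.2| ∂(ν.prod ν) = 2 * ∫ x, g x * k (g x) ∂ν := by
    rw [← hkey g hg hgi]
    congr 1
    funext p
    rw [gsgn_mul]
  have hkgd : Integrable (fun x => gd x * k (g x)) ν := by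
    refine Integrable.mono' hgdi.abs ?_ ?_
    · exact (hgd.mul (hk_meas.comp hg)).aestronglyMeasurable
    · refine Filter.Eventually.of_forall (fun x => ?_)
      rw [Real.norm_eq_abs, abs_mul]
      calc |gd x| * |k (g x)| ≤ |gd x| * 1 :=
            mul_le_mul_of_nonneg_left (hk_bd _) (abs_nonneg _)
        _ = |gd x| := mul_one _
  have hkgg : Integrable (fun x => g x * k (g x)) ν := by
    refine Integrable.mono' hgi.abs ?_ ?_
    · exact (hg.mul (hk_meas.comp hg)).aestronglyMeasurable
    · refine Filter.Eventually.of_forall (fun x => ?_)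
      rw [Real.norm_eq_abs, abs_mul]
      calc |g x| * |k (g x)| ≤ |g x| * 1 :=
            mul_le_mul_of_nonneg_left (hk_bd _) (abs_nonneg _)
        _ = |g x| := mul_one _
  have hJcross : ∫ p, (gd p.1 - gd p.2) * gsgn (g p.1 - g p.2) ∂(ν.prod ν)
      = ∫ p, |g p.1 - g p.2| ∂(ν.prod ν) := by
    rw [hkey gd hgd hgdi, hJg]
    have h0 := horth k hk_meas hk_bd
    have : ∫ x, gd x * k (g x) ∂ν = ∫ x, g x * k (g x) ∂ν := by
      have hsub : ∫ x, (gd x * k (g x) - g x * k (g x)) ∂ν = 0 := by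
        rw [← h0]
        congr 1
        funext x
        ring
      rw [integral_sub hkgd hkgg] at hsub
      linarith
    rw [this]
  have icross : Integrable (fun p : E × E => (gd p.1 - gd p.2) * gsgn (g p.1 - g p.2))
      (ν.prod ν) := by
    refine Integrable.mono' hId ?_ ?_
    · exact (((hgd.comp measurable_fst).sub (hgd.comp measurable_snd)).mul
        (gsgn_meas.comp ((hg.comp measurable_fst).sub (hg.comp measurable_snd)))).aestronglyMeasurable
    · refine Filter.Eventually.of_forall (fun p => ?_)
      rw [Real.norm_eq_abs, abs_mul]
      calc |gd p.1 - gd p.2| * |gsgn (g p.1 - g p.2)| ≤ |gd p.1 - gd p.2| * 1 :=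
            mul_le_mul_of_nonneg_left (gsgn_abs_le _) (abs_nonneg _)
        _ = |gd p.1 - gd p.2| := mul_one _
  have hIneq : (∫ p, |g p.1 - g p.2| ∂(ν.prod ν)) ≤ ∫ p, |gd p.1 - gd p.2| ∂(ν.prod ν) := by
    rw [← hJcross]
    refine integral_mono icross hId (fun p => ?_)
    calc (gd p.1 - gd p.2) * gsgn (g p.1 - g p.2)
        ≤ |(gd p.1 - gd p.2) * gsgn (g p.1 - g p.2)| := le_abs_self _
      _ = |gd p.1 - gd p.2| * |gsgn (g p.1 - g p.2)| := abs_mul _ _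
      _ ≤ |gd p.1 - gd p.2| * 1 := mul_le_mul_of_nonneg_left (gsgn_abs_le _) (abs_nonneg _)
      _ = |gd p.1 - gd p.2| := mul_one _
  refine ⟨hIneq, fun hEq => ?_⟩
  -- equality case
  have hΦint : Integrable (fun p : E × E =>
      |gd p.1 - gd p.2| - (gd p.1 - gd p.2) * gsgn (g p.1 - g p.2)) (ν.prod ν) := hId.sub icross
  have hΦnn : 0 ≤ᵐ[ν.prod ν] (fun p : E × E =>
      |gd p.1 - gd p.2| - (gd p.1 - gd p.2) * gsgn (g p.1 - g p.2)) := by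
    refine Filter.Eventually.of_forall (fun p => ?_)
    have : (gd p.1 - gd p.2) * gsgn (g p.1 - g p.2) ≤ |gd p.1 - gd p.2| := by
      calc (gd p.1 - gd p.2) * gsgn (g p.1 - g p.2)
          ≤ |(gd p.1 - gd p.2) * gsgn (g p.1 - g p.2)| := le_abs_self _
        _ = |gd p.1 - gd p.2| * |gsgn (g p.1 - g p.2)| := abs_mul _ _
        _ ≤ |gd p.1 - gd p.2| * 1 := mul_le_mul_of_nonneg_left (gsgn_abs_le _) (abs_nonneg _)
        _ = |gd p.1 - gd p.2| := mul_one _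
    simpa using this
  have hΦ0 : ∫ p, (|gd p.1 - gd p.2| - (gd p.1 - gd p.2) * gsgn (g p.1 - g p.2)) ∂(ν.prod ν)
      = 0 := by
    rw [integral_sub hId icross, hJcross, ← hEq, sub_self]
  have hae := (integral_eq_zero_iff_of_nonneg_ae hΦnn hΦint).mp hΦ0
  filter_upwards [hae] with p hp hle
  have hp' : |gd p.1 - gd p.2| = (gd p.1 - gd p.2) * gsgn (g p.1 - g p.2) := by
    have : |gd p.1 - gd p.2| - (gd p.1 - gd p.2) * gsgn (g p.1 - g p.2) = 0 := hp
    linarith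
  rcases lt_or_eq_of_le hle with hlt | heq
  · have hs : gsgn (g p.1 - g p.2) = -1 := by
      unfold gsgn
      rw [if_neg (by linarith), if_pos (by linarith)]
    rw [hs] at hp'
    have := abs_nonneg (gd p.1 - gd p.2)
    nlinarith [hp']
  · have hs : gsgn (g p.1 - g p.2) = 0 := by
      unfold gsgn
      rw [if_neg (by linarith), if_neg (by linarith)]
    rw [hs, mul_zero] at hp'
    have := abs_eq_zero.mp hp'
    linarith

end aux


/-- Strict consistency of the Gini index under auto-calibration: if `μ̂(X)` is
auto-calibrated for `Y`, `μ†(X) = E[Y|X]`, and `Z` is an independent copy of `X`, then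
equality `E[|μ̂(X) − μ̂(Z)|] = E[|μ†(X) − μ†(Z)|]` forces `μ̂(X) = μ†(X)` a.s.;
consequently `G^ML_{Y,μ†(X)} > G^ML_{Y,μ̂(X)}` unless `μ̂(X) = μ†(X)` a.s., where under
auto-calibration the ML Gini index is the positive multiple (independent of the predictor)
`c` of the economic Gini numerator `E[|m(X) − m(Z)|]/(2 E[Y])`. -/
theorem Gini_strictly_consistent_under_auto_calibration
    {Ω E : Type*} [MeasurableSpace Ω] [MeasurableSpace E]
    (P : Measure Ω) [IsProbabilityMeasure P]
    (X Z : Ω → E) (Y : Ω → ℝ)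
    (hX : Measurable X) (hZ : Measurable Z) (hY : Integrable Y P)
    (hYpos : ∀ ω, 0 ≤ Y ω) (hEY : 0 < ∫ ω, Y ω ∂P)
    (hYnondet : ¬ ∃ cst : ℝ, Y =ᵐ[P] fun _ => cst)
    (hindep : IndepFun X Z P) (hid : IdentDistrib X Z P P)
    -- μ† as a measurable function of the covariates, a version of E[Y|X]:
    (gdag : E → ℝ) (hgdag : Measurable gdag)
    (hver : (fun ω => gdag (X ω)) =ᵐ[P] P[Y | MeasurableSpace.comap X inferInstance])
    -- μ̂ as a measurable function of the covariates, auto-calibrated for Y: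
    (g : E → ℝ) (hg : Measurable g)
    (hauto : P[Y | MeasurableSpace.comap (fun ω => g (X ω)) Real.measurableSpace]
      =ᵐ[P] fun ω => g (X ω))
    (hint1 : Integrable (fun ω => |g (X ω) - g (Z ω)|) P)
    (hint2 : Integrable (fun ω => |gdag (X ω) - gdag (Z ω)|) P)
    -- under auto-calibration the ML Gini index is a positive multiple, independent of the
    -- predictor, of the economic Gini numerator:
    (c : ℝ) (hc : 0 < c) (GML : (E → ℝ) → ℝ)
    (hGML : ∀ m : E → ℝ, GML m = c * ((∫ ω, |m (X ω) - m (Z ω)| ∂P) / (2 * ∫ ω, Y ω ∂P))) :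
    ((∫ ω, |g (X ω) - g (Z ω)| ∂P) = (∫ ω, |gdag (X ω) - gdag (Z ω)| ∂P) →
      (fun ω => g (X ω)) =ᵐ[P] fun ω => gdag (X ω)) ∧
    (¬ ((fun ω => g (X ω)) =ᵐ[P] fun ω => gdag (X ω)) → GML g < GML gdag) := by
  classical
  set ν : Measure E := P.map X with hν_def
  haveI : IsProbabilityMeasure ν := Measure.isProbabilityMeasure_map hX.aemeasurable
  -- the joint law of (X, Z) is ν ⊗ ν
  have hmapXZ : P.map (fun ω => (X ω, Z ω)) = ν.prod ν := by
    have h1 := (indepFun_iff_map_prod_eq_prod_map_map hX.aemeasurable hZ.aemeasurable).mp hindep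
    rw [h1, ← hid.map_eq]
  -- transfer of the two Gini integrals
  have habs_meas_g : Measurable (fun p : E × E => |g p.1 - g p.2|) :=
    ((hg.comp measurable_fst).sub (hg.comp measurable_snd)).abs
  have habs_meas_d : Measurable (fun p : E × E => |gdag p.1 - gdag p.2|) :=
    ((hgdag.comp measurable_fst).sub (hgdag.comp measurable_snd)).abs
  have hXZae : AEMeasurable (fun ω => (X ω, Z ω)) P := hX.aemeasurable.prodMk hZ.aemeasurable
  have hTg : ∫ ω, |g (X ω) - g (Z ω)| ∂P = ∫ p, |g p.1 - g p.2| ∂(ν.prod ν) := by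
    rw [← hmapXZ, integral_map hXZae habs_meas_g.aestronglyMeasurable]
  have hTd : ∫ ω, |gdag (X ω) - gdag (Z ω)| ∂P = ∫ p, |gdag p.1 - gdag p.2| ∂(ν.prod ν) := by
    rw [← hmapXZ, integral_map hXZae habs_meas_d.aestronglyMeasurable]
  have hIg : Integrable (fun p : E × E => |g p.1 - g p.2|) (ν.prod ν) := by
    rw [← hmapXZ]
    exact (integrable_map_measure habs_meas_g.aestronglyMeasurable hXZae).mpr
      (by simpa [Function.comp_def] using hint1)
  have hId : Integrable (fun p : E × E => |gdag p.1 - gdag p.2|) (ν.prod ν) := by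
    rw [← hmapXZ]
    exact (integrable_map_measure habs_meas_d.aestronglyMeasurable hXZae).mpr
      (by simpa [Function.comp_def] using hint2)
  -- conditional expectation facts
  have hGle : MeasurableSpace.comap (fun ω => g (X ω)) Real.measurableSpace
      ≤ ‹MeasurableSpace Ω› :=
    Measurable.comap_le (show Measurable fun ω => g (X ω) from hg.comp hX)
  set G : MeasurableSpace Ω := MeasurableSpace.comap (fun ω => g (X ω)) Real.measurableSpace
    with hG_def
  have hle2 : G ≤ MeasurableSpace.comap X inferInstance := by
    rw [hG_def]
    have : MeasurableSpace.comap (fun ω => g (X ω)) Real.measurableSpace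
        = MeasurableSpace.comap X (MeasurableSpace.comap g Real.measurableSpace) := by
      rw [MeasurableSpace.comap_comp]
      rfl
    rw [this]
    exact MeasurableSpace.comap_mono hg.comap_le
  have hMint : Integrable (fun ω => gdag (X ω)) P := integrable_condExp.congr hver.symm
  have hmint : Integrable (fun ω => g (X ω)) P := integrable_condExp.congr hauto
  have hA : (fun ω => g (X ω)) =ᵐ[P] P[fun ω => gdag (X ω) | G] := by
    calc (fun ω => g (X ω)) =ᵐ[P] P[Y | G] := hauto.symm
      _ =ᵐ[P] P[P[Y | MeasurableSpace.comap X inferInstance] | G] :=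
        (condExp_condExp_of_le hle2 hX.comap_le).symm
      _ =ᵐ[P] P[fun ω => gdag (X ω) | G] := condExp_congr_ae hver.symm
  -- orthogonality on Ω
  have horthΩ : ∀ k : ℝ → ℝ, Measurable k → (∀ t, |k t| ≤ 1) →
      ∫ ω, (gdag (X ω) - g (X ω)) * k (g (X ω)) ∂P = 0 := by
    intro k hk hkb
    have hgXG : Measurable[G] (fun ω => g (X ω)) := Measurable.of_comap_le le_rfl
    have hfG : StronglyMeasurable[G] (fun ω => k (g (X ω))) :=
      (hk.comp hgXG).stronglyMeasurable
    have hbd : ∃ C, ∀ ω, ‖k (g (X ω))‖ ≤ C :=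
      ⟨1, fun ω => by simpa [Real.norm_eq_abs] using hkb (g (X ω))⟩
    have hkM : Integrable (fun ω => k (g (X ω)) * gdag (X ω)) P :=
      hMint.bdd_mul ((hfG.mono hGle).aestronglyMeasurable) (Filter.Eventually.of_forall hbd.choose_spec)
    have hkm : Integrable (fun ω => k (g (X ω)) * g (X ω)) P :=
      hmint.bdd_mul ((hfG.mono hGle).aestronglyMeasurable) (Filter.Eventually.of_forall hbd.choose_spec)
    have hpull : P[fun ω => k (g (X ω)) * gdag (X ω) | G]
        =ᵐ[P] (fun ω => k (g (X ω))) * P[fun ω => gdag (X ω) | G] :=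
      condExp_mul_of_stronglyMeasurable_left hfG hkM hMint
    have step : ∫ ω, k (g (X ω)) * gdag (X ω) ∂P = ∫ ω, k (g (X ω)) * g (X ω) ∂P := by
      calc ∫ ω, k (g (X ω)) * gdag (X ω) ∂P
          = ∫ ω, (P[fun ω => k (g (X ω)) * gdag (X ω) | G]) ω ∂P :=
            (integral_condExp hGle).symm
        _ = ∫ ω, ((fun ω => k (g (X ω))) * P[fun ω => gdag (X ω) | G]) ω ∂P :=
            integral_congr_ae hpull
        _ = ∫ ω, k (g (X ω)) * g (X ω) ∂P := by
            refine integral_congr_ae ?_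
            filter_upwards [hA] with ω hω
            simp only [Pi.mul_apply]
            rw [← hω]
    have hrw : (fun ω => (gdag (X ω) - g (X ω)) * k (g (X ω)))
        = fun ω => k (g (X ω)) * gdag (X ω) - k (g (X ω)) * g (X ω) := by
      funext ω; ring
    rw [hrw, integral_sub hkM hkm, step, sub_self]
  -- transfer to ν
  have hgi : Integrable g ν := by
    rw [hν_def]
    exact (integrable_map_measure hg.aestronglyMeasurable hX.aemeasurable).mpr
      (by simpa [Function.comp_def] using hmint)
  have hdi : Integrable gdag ν := by
    rw [hν_def]
    exact (integrable_map_measure hgdag.aestronglyMeasurable hX.aemeasurable).mpr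
      (by simpa [Function.comp_def] using hMint)
  have horth : ∀ k : ℝ → ℝ, Measurable k → (∀ t, |k t| ≤ 1) →
      ∫ x, (gdag x - g x) * k (g x) ∂ν = 0 := by
    intro k hk hkb
    have hmeas : Measurable fun x => (gdag x - g x) * k (g x) :=
      (hgdag.sub hg).mul (hk.comp hg)
    have htr := integral_map (μ := P) hX.aemeasurable
      (f := fun x => (gdag x - g x) * k (g x)) hmeas.aestronglyMeasurable
    rw [hν_def, htr]
    exact horthΩ k hk hkb
  obtain ⟨hIneq, hEqCase⟩ := gini_integral_key ν g gdag hg hgdag hgi hdi hId horth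
  -- Part 1
  have part1 : (∫ ω, |g (X ω) - g (Z ω)| ∂P) = (∫ ω, |gdag (X ω) - gdag (Z ω)| ∂P) →
      (fun ω => g (X ω)) =ᵐ[P] fun ω => gdag (X ω) := by
    intro hEq
    have hEq' : (∫ p, |g p.1 - g p.2| ∂(ν.prod ν)) = ∫ p, |gdag p.1 - gdag p.2| ∂(ν.prod ν) := by
      rw [← hTg, ← hTd]; exact hEq
    have hpair := hEqCase hEq'
    obtain ⟨w, hw, hwae⟩ := factor_of_pair_mono ν g gdag hg hgdag hpair
    have hPae : ∀ᵐ ω ∂P, gdag (X ω) = w (g (X ω)) := by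
      have := ae_of_ae_map hX.aemeasurable (p := fun x => gdag x = w (g x))
        (by rw [← hν_def]; exact hwae)
      exact this
    have hgXG : Measurable[G] (fun ω => g (X ω)) := Measurable.of_comap_le le_rfl
    have hW : AEStronglyMeasurable[G] (fun ω => gdag (X ω)) P :=
      ⟨fun ω => w (g (X ω)), (hw.comp hgXG).stronglyMeasurable, hPae⟩
    have hMG : P[fun ω => gdag (X ω) | G] =ᵐ[P] fun ω => gdag (X ω) :=
      condExp_of_aestronglyMeasurable' hGle hW hMint
    exact hA.trans hMG
  refine ⟨part1, fun hne => ?_⟩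
  -- Part 2
  have hlt : (∫ ω, |g (X ω) - g (Z ω)| ∂P) < ∫ ω, |gdag (X ω) - gdag (Z ω)| ∂P := by
    have hle' : (∫ ω, |g (X ω) - g (Z ω)| ∂P) ≤ ∫ ω, |gdag (X ω) - gdag (Z ω)| ∂P := by
      rw [hTg, hTd]; exact hIneq
    rcases lt_or_eq_of_le hle' with h | h
    · exact h
    · exact absurd (part1 h) hne
  rw [hGML g, hGML gdag]
  have hD : (0:ℝ) < (2 * ∫ ω, Y ω ∂P)⁻¹ := inv_pos.mpr (by linarith)
  rw [div_eq_mul_inv, div_eq_mul_inv]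
  exact mul_lt_mul_of_pos_left (mul_lt_mul_of_pos_right hlt hD) hc
end
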